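/- arXiv:2007.11748 — 7 statements merged into one kernel-verified Lean document; each statement's English description precedes it below -/
import Mathlib

section
/- Let n ≥ 1 be a natural number and x_1, …, x_n real numbers. The following are equivalent: (A) for every choice of nonnegative real numbers p_1, …, p_n with ∑_{i=1}^n p_i = 1 one has ∑_{i=1}^n p_i x_i ≥ -∑_{i=1}^n p_i log p_i; (B) ∑_{i=1}^n e^{-x_i} ≤ 1. -/
/-- Pointwise Gibbs-type inequality: for `0 ≤ p` and `0 < q`,
`p - q ≤ p * (log p - log q)`. -/
lemma gibbs_pointwise {p q : ℝ} (hp : 0 ≤ p) (hq : 0 < q) :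
    p - q ≤ p * (Real.log p - Real.log q) := by
  rcases eq_or_lt_of_le hp with h | hp
  · simp [← h, hq.le]
  · have h1 : Real.log (q / p) ≤ q / p - 1 :=
      Real.log_le_sub_one_of_pos (div_pos hq hp)
    have h2 : Real.log (q / p) = Real.log q - Real.log p :=
      Real.log_div hq.ne' hp.ne'
    rw [h2] at h1
    have h3 : p * (Real.log q - Real.log p) ≤ p * (q / p - 1) :=
      mul_le_mul_of_nonneg_left h1 hp.le
    have h4 : p * (q / p - 1) = q - p := by field_simp
    nlinarith

/-- Lemma (equivalence of two formulations of the Landauer bound):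
For `n ≥ 1` real numbers `x i`, the following are equivalent:
(A) for every probability vector `p`, `∑ p i * x i ≥ -∑ p i * log (p i)`;
(B) `∑ exp (-x i) ≤ 1`.
(Note: `Real.log 0 = 0` in Mathlib, matching the convention `0 · log 0 = 0`.) -/
theorem landauer_formulations_equivalent (n : ℕ) (hn : 1 ≤ n) (x : Fin n → ℝ) :
    (∀ p : Fin n → ℝ, (∀ i, 0 ≤ p i) → ∑ i, p i = 1 →
      ∑ i, p i * x i ≥ -∑ i, p i * Real.log (p i)) ↔
    ∑ i, Real.exp (-x i) ≤ 1 := by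
  constructor
  · intro hA
    set S := ∑ i, Real.exp (-x i) with hS
    have hSpos : 0 < S :=
      Finset.sum_pos (fun i _ => Real.exp_pos _) ⟨⟨0, hn⟩, Finset.mem_univ _⟩
    set p : Fin n → ℝ := fun i => Real.exp (-x i) / S with hp
    have hp0 : ∀ i, 0 ≤ p i := fun i => div_nonneg (Real.exp_pos _).le hSpos.le
    have hp1 : ∑ i, p i = 1 := by
      simp only [hp, ← Finset.sum_div, ← hS, div_self hSpos.ne']
    have h := hA p hp0 hp1
    have hlog : ∀ i, Real.log (p i) = -x i - Real.log S := by
      intro i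
      simp only [hp]
      rw [Real.log_div (Real.exp_pos _).ne' hSpos.ne', Real.log_exp]
    have hsum : ∑ i, p i * Real.log (p i)
        = -(∑ i, p i * x i) - Real.log S := by
      have : ∀ i ∈ Finset.univ, p i * Real.log (p i)
          = -(p i * x i) - p i * Real.log S := by
        intro i _
        rw [hlog i]; ring
      rw [Finset.sum_congr rfl this, Finset.sum_sub_distrib,
        Finset.sum_neg_distrib, ← Finset.sum_mul, hp1, one_mul]
    rw [hsum] at h
    have hlogS : Real.log S ≤ 0 := by linarith
    calc S = Real.exp (Real.log S) := (Real.exp_log hSpos).symm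
      _ ≤ Real.exp 0 := Real.exp_le_exp.mpr hlogS
      _ = 1 := Real.exp_zero
  · intro hB p hp0 hp1
    have key : ∀ i ∈ Finset.univ,
        p i - Real.exp (-x i) ≤ p i * Real.log (p i) + p i * x i := by
      intro i _
      have := gibbs_pointwise (hp0 i) (Real.exp_pos (-x i))
      rw [Real.log_exp] at this
      nlinarith [this]
    have hsum := Finset.sum_le_sum key
    rw [Finset.sum_sub_distrib, hp1, Finset.sum_add_distrib] at hsum
    have : 0 ≤ ∑ i, p i * Real.log (p i) + ∑ i, p i * x i := by linarith
    linarith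
end

section
/- Let (X, μ) be a σ-finite measure space, H : X → ℝ measurable, and β > 0, with partition function Z = ∫ e^{-βH} dμ ∈ (0, ∞); let g = Z⁻¹ e^{-βH} be the canonical density. Then for every probability density f on X such that H·f and f·log f are μ-integrable, one has ∫ H f dμ - β⁻¹ S[f] ≥ -β⁻¹ log Z; moreover, if H·g is μ-integrable then g attains this minimum: ∫ H g dμ - β⁻¹ S[g] = -β⁻¹ log Z. In particular the canonical distribution minimizes ⟨H⟩_ρ - T S[ρ] (with T = 1/β) among all probability densities. -/
open MeasureTheory

/-- The canonical distribution minimizes the free energy `⟨H⟩_ρ - T S[ρ]` (with `T = 1/β`,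
`S[f] = -∫ f log f dμ`) among probability densities: every density `f` with `H·f` and
`f·log f` integrable satisfies `∫ H f dμ - β⁻¹ S[f] ≥ -β⁻¹ log Z`, and the canonical
density `g = Z⁻¹ e^{-βH}` attains the minimum `-β⁻¹ log Z`. -/
theorem canonical_minimizes_free_energy {X : Type*} [MeasurableSpace X]
    (μ : Measure X) [SigmaFinite μ]
    (H : X → ℝ) (hH : Measurable H) (β : ℝ) (hβ : 0 < β)
    (hexp : Integrable (fun x => Real.exp (-β * H x)) μ)
    (Z : ℝ) (hZ : Z = ∫ x, Real.exp (-β * H x) ∂μ) (hZpos : 0 < Z)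
    (g : X → ℝ) (hg : g = fun x => Z⁻¹ * Real.exp (-β * H x)) :
    (∀ f : X → ℝ, Measurable f → (∀ x, 0 ≤ f x) → Integrable f μ →
      (∫ x, f x ∂μ) = 1 →
      Integrable (fun x => H x * f x) μ →
      Integrable (fun x => f x * Real.log (f x)) μ →
      (∫ x, H x * f x ∂μ) - β⁻¹ * (-∫ x, f x * Real.log (f x) ∂μ) ≥
        -β⁻¹ * Real.log Z) ∧
    (Integrable (fun x => H x * g x) μ →
      (∫ x, H x * g x ∂μ) - β⁻¹ * (-∫ x, g x * Real.log (g x) ∂μ) =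
        -β⁻¹ * Real.log Z) := by
  have hgpos : ∀ x, 0 < g x := by intro x; rw [hg]; positivity
  have hlogg : ∀ x, Real.log (g x) = -Real.log Z - β * H x := by
    intro x
    rw [hg]
    rw [Real.log_mul (by positivity) (Real.exp_ne_zero _), Real.log_inv, Real.log_exp]
    ring
  have hgint : Integrable g μ := by rw [hg]; exact hexp.const_mul _
  have hgint1 : (∫ x, g x ∂μ) = 1 := by
    rw [hg, integral_const_mul, ← hZ]
    field_simp
  constructor
  · intro f hfm hf0 hfi hf1 hHf hflog
    -- pointwise inequality
    have key : ∀ x, f x - g x ≤ f x * Real.log (f x) - f x * Real.log (g x) := by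
      intro x
      rcases eq_or_lt_of_le (hf0 x) with h | h
      · simp only [← h, zero_mul, zero_sub, sub_zero, neg_nonpos]
        have := (hgpos x).le
        simp only [← h] at *
        linarith
      · have hb := hgpos x
        have h1 := Real.log_le_sub_one_of_pos (show 0 < g x / f x from div_pos hb h)
        rw [Real.log_div (ne_of_gt hb) (ne_of_gt h)] at h1
        have h2 := mul_le_mul_of_nonneg_left h1 h.le
        have hc : f x * (g x / f x) = g x := by field_simp
        nlinarith [h2, hc]
    -- the function f * log g rewritten
    have hflogg_eq : (fun x => f x * Real.log (g x))
        = fun x => -Real.log Z * f x - β * (H x * f x) := by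
      funext x; rw [hlogg x]; ring
    have hflogg_int : Integrable (fun x => f x * Real.log (g x)) μ := by
      rw [hflogg_eq]
      exact (hfi.const_mul _).sub (hHf.const_mul β)
    have hflogg_val : (∫ x, f x * Real.log (g x) ∂μ)
        = -Real.log Z - β * ∫ x, H x * f x ∂μ := by
      rw [hflogg_eq, integral_sub (hfi.const_mul _) (hHf.const_mul β),
        integral_const_mul, integral_const_mul, hf1]
      ring
    have hmono := integral_mono (hfi.sub hgint) (hflog.sub hflogg_int) key
    simp only [Pi.sub_apply] at hmono
    rw [integral_sub hfi hgint, integral_sub hflog hflogg_int, hf1, hgint1,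
      hflogg_val] at hmono
    -- hmono : 1 - 1 ≤ ∫ f log f - (-log Z - β ∫ H f)
    have h3 : -Real.log Z ≤ β * (∫ x, H x * f x ∂μ) + ∫ x, f x * Real.log (f x) ∂μ := by
      linarith
    have heq : (∫ x, H x * f x ∂μ) - β⁻¹ * (-∫ x, f x * Real.log (f x) ∂μ)
        = β⁻¹ * (β * (∫ x, H x * f x ∂μ) + ∫ x, f x * Real.log (f x) ∂μ) := by
      field_simp
      ring
    rw [ge_iff_le, heq, neg_mul, ← mul_neg]
    exact mul_le_mul_of_nonneg_left h3 (inv_nonneg.mpr hβ.le)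
  · intro hHg
    have hglogg_eq : (fun x => g x * Real.log (g x))
        = fun x => -Real.log Z * g x - β * (H x * g x) := by
      funext x; rw [hlogg x]; ring
    have hval : (∫ x, g x * Real.log (g x) ∂μ)
        = -Real.log Z - β * ∫ x, H x * g x ∂μ := by
      rw [hglogg_eq, integral_sub (hgint.const_mul _) (hHg.const_mul β),
        integral_const_mul, integral_const_mul, hgint1]
      ring
    rw [hval]
    field_simp
    ring
end

section
/- Let (X, μ) and (Y, ν) be σ-finite measure spaces and let f be a probability density on X × Y with respect to the product measure μ ⊗ ν, with marginal densities f_X(x) = ∫ f(x, y) dν(y) and f_Y(y) = ∫ f(x, y) dμ(x). Assume f·log f, f_X·log f_X, and f_Y·log f_Y are integrable. Then S[f] ≤ S[f_X] + S[f_Y], with equality if and only if f(x, y) = f_X(x) f_Y(y) for (μ ⊗ ν)-almost every (x, y) (i.e., the two subsystems are probabilistically independent). -/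
open MeasureTheory

lemma gibbs_aux {a b : ℝ} (ha : 0 ≤ a) (hb : 0 < b) :
    a * Real.log b - a * Real.log a ≤ b - a := by
  rcases ha.eq_or_lt with h | h
  · simp [← h]; linarith
  · have h1 : Real.log (b / a) ≤ b / a - 1 := Real.log_le_sub_one_of_pos (by positivity)
    have h2 : Real.log (b / a) = Real.log b - Real.log a := Real.log_div hb.ne' h.ne'
    have h3 : a * (b / a - 1) = b - a := by field_simp
    nlinarith

lemma gibbs_aux_eq {a b : ℝ} (ha : 0 ≤ a) (hb : 0 < b)
    (h : a * Real.log b - a * Real.log a = b - a) : a = b := by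
  rcases ha.eq_or_lt with h0 | h0
  · simp [← h0] at h; linarith
  · by_contra hne
    have hne' : b / a ≠ 1 := by
      intro hc
      exact hne (by field_simp at hc; linarith)
    have h1 : Real.log (b / a) < b / a - 1 :=
      Real.log_lt_sub_one_of_pos (by positivity) hne'
    have h2 : Real.log (b / a) = Real.log b - Real.log a := Real.log_div hb.ne' h0.ne'
    have h3 : a * (b / a - 1) = b - a := by field_simp
    nlinarith

/-- Subadditivity of the Gibbs entropy `S[f] = -∫ f log f`: for a probability density `f`
on a product space with marginals `fX`, `fY`, one has `S[f] ≤ S[fX] + S[fY]`, with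
equality iff `f(x,y) = fX x * fY y` almost everywhere (probabilistic independence). -/
theorem entropy_subadditive {X Y : Type*} [MeasurableSpace X] [MeasurableSpace Y]
    (μ : Measure X) (ν : Measure Y) [SigmaFinite μ] [SigmaFinite ν]
    (f : X × Y → ℝ) (hfm : Measurable f) (hf0 : ∀ z, 0 ≤ f z)
    (hfi : Integrable f (μ.prod ν)) (hf1 : (∫ z, f z ∂(μ.prod ν)) = 1)
    (fX : X → ℝ) (hfX : ∀ x, fX x = ∫ y, f (x, y) ∂ν)
    (fY : Y → ℝ) (hfY : ∀ y, fY y = ∫ x, f (x, y) ∂μ)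
    (hSf : Integrable (fun z => f z * Real.log (f z)) (μ.prod ν))
    (hSfX : Integrable (fun x => fX x * Real.log (fX x)) μ)
    (hSfY : Integrable (fun y => fY y * Real.log (fY y)) ν) :
    (-∫ z, f z * Real.log (f z) ∂(μ.prod ν)) ≤
      (-∫ x, fX x * Real.log (fX x) ∂μ) + (-∫ y, fY y * Real.log (fY y) ∂ν) ∧
    ((-∫ z, f z * Real.log (f z) ∂(μ.prod ν)) =
      (-∫ x, fX x * Real.log (fX x) ∂μ) + (-∫ y, fY y * Real.log (fY y) ∂ν) ↔
      f =ᵐ[μ.prod ν] fun z => fX z.1 * fY z.2) := by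
  -- basic facts about the marginals
  have hfXe : fX = fun x => ∫ y, f (x, y) ∂ν := funext hfX
  have hfYe : fY = fun y => ∫ x, f (x, y) ∂μ := funext hfY
  have mfX : Measurable fX := by
    rw [hfXe]; exact hfm.stronglyMeasurable.integral_prod_right'.measurable
  have mfY : Measurable fY := by
    rw [hfYe]
    exact (hfm.comp measurable_swap).stronglyMeasurable.integral_prod_right'.measurable
  have fX0 : ∀ x, 0 ≤ fX x := fun x => by
    rw [hfX]; exact integral_nonneg fun y => hf0 _
  have fY0 : ∀ y, 0 ≤ fY y := fun y => by
    rw [hfY]; exact integral_nonneg fun x => hf0 _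
  have hfXi : Integrable fX μ := by rw [hfXe]; exact hfi.integral_prod_left
  have hfYi : Integrable fY ν := by rw [hfYe]; exact hfi.swap.integral_prod_left
  have intX1 : ∫ x, fX x ∂μ = 1 := by
    rw [hfXe, ← integral_prod f hfi, hf1]
  have intY1 : ∫ y, fY y ∂ν = 1 := by
    rw [hfYe, ← integral_prod_symm f hfi, hf1]
  -- a.e., f z ≠ 0 → fX z.1 ≠ 0
  have ae1 : ∀ᵐ z ∂(μ.prod ν), f z ≠ 0 → fX z.1 ≠ 0 := by
    have hs : MeasurableSet {z : X × Y | fX z.1 = 0 ∧ f z ≠ 0} := by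
      have h1 : MeasurableSet {z : X × Y | fX z.1 = 0} :=
        (mfX.comp measurable_fst) (measurableSet_singleton 0)
      have h2 : MeasurableSet {z : X × Y | f z = 0} := hfm (measurableSet_singleton 0)
      exact h1.inter h2.compl
    have hnull : (μ.prod ν) {z : X × Y | fX z.1 = 0 ∧ f z ≠ 0} = 0 := by
      rw [Measure.measure_prod_null hs]
      filter_upwards [hfi.prod_right_ae] with x hx
      by_cases hfx : fX x = 0
      · have hz : ∀ᵐ y ∂ν, f (x, y) = 0 := by
          have := (integral_eq_zero_iff_of_nonneg (fun y => hf0 _) hx).mp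
            (by rw [← hfX]; exact hfx)
          filter_upwards [this] with y hy using hy
        have : ν {y | f (x, y) ≠ 0} = 0 := by
          simpa using ae_iff.mp hz
        refine measure_mono_null ?_ this
        intro y hy; exact hy.2
      · have : Prod.mk x ⁻¹' {z : X × Y | fX z.1 = 0 ∧ f z ≠ 0} = ∅ := by
          ext y; simp [hfx]
        simp [this]
    have := (MeasureTheory.measure_eq_zero_iff_ae_notMem).mp hnull
    filter_upwards [this] with z hz hfz
    intro hfXz; exact hz ⟨hfXz, hfz⟩
  -- a.e., f z ≠ 0 → fY z.2 ≠ 0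
  have ae2 : ∀ᵐ z ∂(μ.prod ν), f z ≠ 0 → fY z.2 ≠ 0 := by
    have ht : MeasurableSet {w : Y × X | fY w.1 = 0 ∧ f (w.2, w.1) ≠ 0} := by
      have h1 : MeasurableSet {w : Y × X | fY w.1 = 0} :=
        (mfY.comp measurable_fst) (measurableSet_singleton 0)
      have h2 : MeasurableSet {w : Y × X | f (w.2, w.1) = 0} :=
        (hfm.comp measurable_swap) (measurableSet_singleton 0)
      exact h1.inter h2.compl
    have hnullt : (ν.prod μ) {w : Y × X | fY w.1 = 0 ∧ f (w.2, w.1) ≠ 0} = 0 := by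
      rw [Measure.measure_prod_null ht]
      filter_upwards [hfi.prod_left_ae] with y hy
      by_cases hfy : fY y = 0
      · have hz : ∀ᵐ x ∂μ, f (x, y) = 0 := by
          have := (integral_eq_zero_iff_of_nonneg (fun x => hf0 _) hy).mp
            (by rw [← hfY]; exact hfy)
          filter_upwards [this] with x hx using hx
        have : μ {x | f (x, y) ≠ 0} = 0 := by
          simpa using ae_iff.mp hz
        refine measure_mono_null ?_ this
        intro x hx; exact hx.2
      · have : Prod.mk y ⁻¹' {w : Y × X | fY w.1 = 0 ∧ f (w.2, w.1) ≠ 0} = ∅ := by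
          ext x; simp [hfy]
        simp [this]
    have hnull : (μ.prod ν) {z : X × Y | fY z.2 = 0 ∧ f z ≠ 0} = 0 := by
      have hpre : Prod.swap ⁻¹' {w : Y × X | fY w.1 = 0 ∧ f (w.2, w.1) ≠ 0}
          = {z : X × Y | fY z.2 = 0 ∧ f z ≠ 0} := by
        ext z; simp [Prod.swap]
      rw [← hpre, ← Measure.map_apply measurable_swap ht, Measure.prod_swap, hnullt]
    have := (MeasureTheory.measure_eq_zero_iff_ae_notMem).mp hnull
    filter_upwards [this] with z hz hfz
    intro hfYz; exact hz ⟨hfYz, hfz⟩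
  -- integrability of z ↦ f z * log (fX z.1) and its integral
  have asm1 : AEStronglyMeasurable (fun z : X × Y => f z * Real.log (fX z.1)) (μ.prod ν) :=
    (hfm.mul (Real.measurable_log.comp (mfX.comp measurable_fst))).aestronglyMeasurable
  have int1 : Integrable (fun z : X × Y => f z * Real.log (fX z.1)) (μ.prod ν) := by
    rw [integrable_prod_iff asm1]
    constructor
    · filter_upwards [hfi.prod_right_ae] with x hx
      exact hx.mul_const _
    · have : (fun x => ∫ y, ‖f (x, y) * Real.log (fX x)‖ ∂ν)
          =ᵐ[μ] fun x => ‖fX x * Real.log (fX x)‖ := by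
        filter_upwards [hfi.prod_right_ae] with x hx
        have : ∀ y, ‖f (x, y) * Real.log (fX x)‖ = f (x, y) * ‖Real.log (fX x)‖ := by
          intro y
          rw [norm_mul, Real.norm_of_nonneg (hf0 _)]
        simp_rw [this]
        rw [integral_mul_const, ← hfX, norm_mul, Real.norm_of_nonneg (fX0 x)]
      exact hSfX.norm.congr this.symm
  have val1 : ∫ z, f z * Real.log (fX z.1) ∂(μ.prod ν) = ∫ x, fX x * Real.log (fX x) ∂μ := by
    rw [integral_prod _ int1]
    congr 1; ext x
    show (∫ y, f (x, y) * Real.log (fX x) ∂ν) = fX x * Real.log (fX x)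
    rw [integral_mul_const, ← hfX]
  -- integrability of z ↦ f z * log (fY z.2) and its integral
  have asm2 : AEStronglyMeasurable (fun z : X × Y => f z * Real.log (fY z.2)) (μ.prod ν) :=
    (hfm.mul (Real.measurable_log.comp (mfY.comp measurable_snd))).aestronglyMeasurable
  have int2 : Integrable (fun z : X × Y => f z * Real.log (fY z.2)) (μ.prod ν) := by
    rw [integrable_prod_iff' asm2]
    constructor
    · filter_upwards [hfi.prod_left_ae] with y hy
      exact hy.mul_const _
    · have : (fun y => ∫ x, ‖f (x, y) * Real.log (fY y)‖ ∂μ)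
          =ᵐ[ν] fun y => ‖fY y * Real.log (fY y)‖ := by
        filter_upwards [hfi.prod_left_ae] with y hy
        have : ∀ x, ‖f (x, y) * Real.log (fY y)‖ = f (x, y) * ‖Real.log (fY y)‖ := by
          intro x
          rw [norm_mul, Real.norm_of_nonneg (hf0 _)]
        simp_rw [this]
        rw [integral_mul_const, ← hfY, norm_mul, Real.norm_of_nonneg (fY0 y)]
      exact hSfY.norm.congr this.symm
  have val2 : ∫ z, f z * Real.log (fY z.2) ∂(μ.prod ν) = ∫ y, fY y * Real.log (fY y) ∂ν := by
    rw [integral_prod_symm _ int2]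
    congr 1; ext y
    show (∫ x, f (x, y) * Real.log (fY y) ∂μ) = fY y * Real.log (fY y)
    rw [integral_mul_const, ← hfY]
  -- the product density g
  set g : X × Y → ℝ := fun z => fX z.1 * fY z.2 with hg
  have hgi : Integrable g (μ.prod ν) := hfXi.mul_prod hfYi
  have hg1 : ∫ z, g z ∂(μ.prod ν) = 1 := by
    rw [hg, integral_prod_mul, intX1, intY1, one_mul]
  have g0 : ∀ z, 0 ≤ g z := fun z => mul_nonneg (fX0 _) (fY0 _)
  -- a.e. splitting of f * log g
  have hlog : (fun z => f z * Real.log (g z))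
      =ᵐ[μ.prod ν] fun z => f z * Real.log (fX z.1) + f z * Real.log (fY z.2) := by
    filter_upwards [ae1, ae2] with z h1 h2
    by_cases hz : f z = 0
    · simp [hz]
    · rw [hg]; rw [Real.log_mul (h1 hz) (h2 hz)]; ring
  have intlogg : Integrable (fun z => f z * Real.log (g z)) (μ.prod ν) :=
    (int1.add int2).congr hlog.symm
  have vallogg : ∫ z, f z * Real.log (g z) ∂(μ.prod ν)
      = (∫ x, fX x * Real.log (fX x) ∂μ) + ∫ y, fY y * Real.log (fY y) ∂ν := by
    rw [integral_congr_ae hlog, integral_add int1 int2, val1, val2]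
  -- the nonnegative integrand H
  have I1 : Integrable (fun z : X × Y => f z * Real.log (f z) - f z * Real.log (g z))
      (μ.prod ν) := hSf.sub intlogg
  have I2 : Integrable (fun z : X × Y => f z * Real.log (f z) - f z * Real.log (g z) - f z)
      (μ.prod ν) := I1.sub hfi
  have HInt : Integrable
      (fun z : X × Y => f z * Real.log (f z) - f z * Real.log (g z) - f z + g z)
      (μ.prod ν) := I2.add hgi
  have Hae0 : ∀ᵐ z ∂(μ.prod ν),
      0 ≤ f z * Real.log (f z) - f z * Real.log (g z) - f z + g z := by
    filter_upwards [ae1, ae2] with z h1 h2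
    by_cases hz : f z = 0
    · simp only [hz, Real.log_zero, zero_mul, sub_zero, sub_self, zero_sub, neg_zero, zero_add]
      exact g0 z
    · have hgz : 0 < g z := by
        rcases (g0 z).eq_or_lt with h | h
        · exfalso
          rcases mul_eq_zero.mp h.symm with h' | h'
          · exact h1 hz h'
          · exact h2 hz h'
        · exact h
      have := gibbs_aux (hf0 z) hgz
      linarith
  have Hval : ∫ z, (f z * Real.log (f z) - f z * Real.log (g z) - f z + g z) ∂(μ.prod ν)
      = (∫ z, f z * Real.log (f z) ∂(μ.prod ν))
      - ((∫ x, fX x * Real.log (fX x) ∂μ) + ∫ y, fY y * Real.log (fY y) ∂ν) := by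
    rw [integral_add I2 hgi, integral_sub I1 hfi, integral_sub hSf intlogg, vallogg, hf1, hg1]
    ring
  have Hnn : 0 ≤ ∫ z, (f z * Real.log (f z) - f z * Real.log (g z) - f z + g z)
      ∂(μ.prod ν) := integral_nonneg_of_ae Hae0
  rw [Hval] at Hnn
  constructor
  · linarith
  · constructor
    · intro heq
      have hH0 : ∫ z, (f z * Real.log (f z) - f z * Real.log (g z) - f z + g z)
          ∂(μ.prod ν) = 0 := by rw [Hval]; linarith
      have hae := (integral_eq_zero_iff_of_nonneg_ae Hae0 HInt).mp hH0
      filter_upwards [ae1, ae2, hae] with z h1 h2 h0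
      have h0' : f z * Real.log (f z) - f z * Real.log (g z) - f z + g z = 0 := h0
      by_cases hz : f z = 0
      · have hgz0 : g z = 0 := by
          rw [hz] at h0'
          simpa using h0'
        show f z = fX z.1 * fY z.2
        rw [hz]; exact hgz0.symm
      · have hgz : 0 < g z := by
          rcases (g0 z).eq_or_lt with h | h
          · exfalso
            rcases mul_eq_zero.mp h.symm with h' | h'
            · exact h1 hz h'
            · exact h2 hz h'
          · exact h
        have h0'' : f z * Real.log (g z) - f z * Real.log (f z) = g z - f z := by linarith
        exact gibbs_aux_eq (hf0 z) hgz h0''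
    · intro heq
      have hH0ae : (fun z => f z * Real.log (f z) - f z * Real.log (g z) - f z + g z)
          =ᵐ[μ.prod ν] fun _ => (0 : ℝ) := by
        filter_upwards [heq] with z hz
        have hz' : f z = g z := hz
        rw [← hz']; ring
      have hH0 : ∫ z, (f z * Real.log (f z) - f z * Real.log (g z) - f z + g z)
          ∂(μ.prod ν) = 0 := by
        rw [integral_congr_ae hH0ae]; simp
      rw [Hval] at hH0
      linarith
end

section
/- Let (X, μ) be a σ-finite measure space, let f_1, …, f_n be probability densities on X with f_i·log f_i μ-integrable, and let p_1, …, p_n be positive reals with ∑_{i=1}^n p_i = 1; set f̄ = ∑_{i=1}^n p_i f_i. Assume the densities are distinguishable, i.e., the supports {x : f_i(x) > 0} are pairwise disjoint up to μ-null sets. Then S[f_i ‖ f̄] = -log p_i for each i, and consequently S[f̄] = ∑_{i=1}^n p_i S[f_i] - ∑_{i=1}^n p_i log p_i. -/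
open MeasureTheory

/-- Mixture of distinguishable states: if the probability densities `f i` have pairwise
disjoint supports up to `μ`-null sets, then for the mixture `f̄ = ∑ p i • f i` the
relative entropies are `S[f i ‖ f̄] = -log (p i)`, and consequently
`S[f̄] = ∑ p i S[f i] - ∑ p i log (p i)`, where `S[f] = -∫ f log f dμ` and
`S[f ‖ g] = ∫ f log (f/g) dμ`. -/
theorem entropy_of_distinguishable_mixture {X : Type*} [MeasurableSpace X]
    (μ : Measure X) [SigmaFinite μ]
    (n : ℕ) (f : Fin n → X → ℝ) (p : Fin n → ℝ)
    (hfm : ∀ i, Measurable (f i)) (hf0 : ∀ i x, 0 ≤ f i x)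
    (hfi : ∀ i, Integrable (f i) μ) (hf1 : ∀ i, (∫ x, f i x ∂μ) = 1)
    (hp : ∀ i, 0 < p i) (hps : ∑ i, p i = 1)
    (fbar : X → ℝ) (hfbar : fbar = fun x => ∑ i, p i * f i x)
    (hSf : ∀ i, Integrable (fun x => f i x * Real.log (f i x)) μ)
    (hdisj : ∀ i j, i ≠ j → μ ({x | 0 < f i x} ∩ {x | 0 < f j x}) = 0) :
    (∀ i, (∫ x, f i x * Real.log (f i x / fbar x) ∂μ) = -Real.log (p i)) ∧
    (-∫ x, fbar x * Real.log (fbar x) ∂μ) =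
      (∑ i, p i * (-∫ x, f i x * Real.log (f i x) ∂μ)) -
      ∑ i, p i * Real.log (p i) := by
  -- a.e. pairwise disjointness
  have hae : ∀ᵐ x ∂μ, ∀ q : Fin n × Fin n, q.1 ≠ q.2 → (f q.1 x = 0 ∨ f q.2 x = 0) := by
    rw [ae_all_iff]
    intro q
    by_cases h : q.1 = q.2
    · filter_upwards with x hq; exact absurd h hq
    · filter_upwards [measure_eq_zero_iff_ae_notMem.mp (hdisj q.1 q.2 h)] with x hx _
      simp only [Set.mem_inter_iff, Set.mem_setOf_eq, not_and_or, not_lt] at hx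
      rcases hx with hx | hx
      · exact Or.inl (le_antisymm hx (hf0 _ x))
      · exact Or.inr (le_antisymm hx (hf0 _ x))
  -- on the support of `f i`, `fbar = p i * f i` pointwise
  have key : ∀ x, (∀ q : Fin n × Fin n, q.1 ≠ q.2 → (f q.1 x = 0 ∨ f q.2 x = 0)) →
      ∀ i, 0 < f i x → fbar x = p i * f i x := by
    intro x hx i hi
    rw [hfbar]
    refine Finset.sum_eq_single i ?_ (by simp)
    intro j _ hj
    rcases hx (j, i) hj with h | h
    · simp [h]
    · exact absurd h hi.ne'
  constructor
  · intro i
    have heq : (fun x => f i x * Real.log (f i x / fbar x)) =ᵐ[μ]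
        fun x => f i x * (-Real.log (p i)) := by
      filter_upwards [hae] with x hx
      rcases eq_or_lt_of_le (hf0 i x) with h | h
      · simp [← h]
      · rw [key x hx i h, div_mul_cancel_right₀ h.ne', Real.log_inv]
    rw [integral_congr_ae heq, integral_mul_const, hf1 i, one_mul]
  · have heq : (fun x => fbar x * Real.log (fbar x)) =ᵐ[μ]
        fun x => ∑ i, (p i * Real.log (p i) * f i x +
          p i * (f i x * Real.log (f i x))) := by
      filter_upwards [hae] with x hx
      by_cases hpos : ∃ i, 0 < f i x
      · obtain ⟨i, hi⟩ := hpos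
        have hz : ∀ j, j ≠ i → f j x = 0 := by
          intro j hj
          rcases hx (j, i) hj with h | h
          · exact h
          · exact absurd h hi.ne'
        rw [key x hx i hi,
          Finset.sum_eq_single i (by intro j _ hj; simp [hz j hj]) (by simp),
          Real.log_mul (hp i).ne' hi.ne']
        ring
      · push_neg at hpos
        have hz : ∀ i, f i x = 0 := fun i => le_antisymm (hpos i) (hf0 i x)
        simp [hfbar, hz]
    have hint : ∀ i : Fin n, Integrable (fun x => p i * Real.log (p i) * f i x +
        p i * (f i x * Real.log (f i x))) μ := fun i =>
      ((hfi i).const_mul _).add ((hSf i).const_mul _)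
    rw [integral_congr_ae heq, integral_finset_sum _ (fun i _ => hint i)]
    have : ∀ i : Fin n, (∫ x, (p i * Real.log (p i) * f i x +
        p i * (f i x * Real.log (f i x))) ∂μ) =
        p i * Real.log (p i) + p i * ∫ x, f i x * Real.log (f i x) ∂μ := by
      intro i
      rw [integral_add ((hfi i).const_mul _) ((hSf i).const_mul _),
        integral_const_mul, integral_const_mul, hf1 i, mul_one]
    rw [Finset.sum_congr rfl (fun i _ => this i), Finset.sum_add_distrib]
    simp only [mul_neg, Finset.sum_neg_distrib]
    ring
end

section
/- (Fundamental Theorem of Statistical Mechanics, classical version.) Let (X, μ) be a σ-finite measure space (the system A) and, for i = 1, …, m, let (Y_i, ν_i) be σ-finite measure spaces (the heat reservoirs B_i) with measurable Hamiltonians H_i : Y_i → ℝ, inverse temperatures β_i > 0, finite nonzero partition functions Z_i = ∫ e^{-β_i H_i} dν_i, and canonical densities g_i = Z_i⁻¹ e^{-β_i H_i}. Let f_A be a probability density on X, let the initial joint density on W = X × Y_1 × ⋯ × Y_m (with the product measure) be the product f₀(x, y_1, …, y_m) = f_A(x) g_1(y_1) ⋯ g_m(y_m), let Φ : W → W be a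 measure-preserving measurable equivalence, and let f₁ = f₀ ∘ Φ⁻¹ be the final joint density, with marginal densities f_A' on X and g_i' on Y_i. Define the expected heat gained by the system from reservoir i as Q_i = ∫ H_i g_i dν_i - ∫ H_i g_i' dν_i. Then, assuming all the entropy integrals S[f_A], S[f_A'], S[g_i], S[g_i'], S[f₁] and the energy integrals ∫ H_i g_i dν_i, ∫ H_i g_i' dν_i are finite, ∑_{i=1}^m β_i Q_i ≤ S[f_A'] - S[f_A]. -/
open MeasureTheory
open Real
open scoped ENNReal NNReal

/-- Gibbs' inequality. -/
lemma gibbs_ineq {α : Type*} [MeasurableSpace α] {μ : Measure α} {p q : α → ℝ}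
    (hp0 : ∀ a, 0 ≤ p a) (hq0 : ∀ a, 0 ≤ q a)
    (hpi : Integrable p μ) (hqi : Integrable q μ)
    (hplp : Integrable (fun a => p a * Real.log (p a)) μ)
    (hplq : Integrable (fun a => p a * Real.log (q a)) μ)
    (hp1 : ∫ a, p a ∂μ = 1) (hq1 : ∫ a, q a ∂μ ≤ 1)
    (habs : ∀ᵐ a ∂μ, q a = 0 → p a = 0) :
    ∫ a, p a * Real.log (q a) ∂μ ≤ ∫ a, p a * Real.log (p a) ∂μ := by
  have key : ∀ᵐ a ∂μ, p a * Real.log (q a) - p a * Real.log (p a) ≤ q a - p a := by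
    filter_upwards [habs] with a ha
    rcases eq_or_lt_of_le (hp0 a) with hp | hp
    · simp [← hp, hq0 a]
    · have hq : 0 < q a := by
        rcases eq_or_lt_of_le (hq0 a) with h | h
        · exact absurd (ha h.symm) (ne_of_gt hp)
        · exact h
      have h1 : Real.log (q a) - Real.log (p a) = Real.log (q a / p a) :=
        (Real.log_div (ne_of_gt hq) (ne_of_gt hp)).symm
      have h2 : Real.log (q a / p a) ≤ q a / p a - 1 :=
        Real.log_le_sub_one_of_pos (div_pos hq hp)
      have := mul_le_mul_of_nonneg_left h2 (le_of_lt hp)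
      rw [mul_sub, mul_div_cancel₀ _ (ne_of_gt hp), mul_one] at this
      calc p a * Real.log (q a) - p a * Real.log (p a)
          = p a * (Real.log (q a) - Real.log (p a)) := by ring
        _ = p a * Real.log (q a / p a) := by rw [h1]
        _ ≤ q a - p a := this
  have h3 : ∫ a, (p a * Real.log (q a) - p a * Real.log (p a)) ∂μ
      ≤ ∫ a, (q a - p a) ∂μ := integral_mono_ae (hplq.sub hplp) (hqi.sub hpi) key
  rw [integral_sub hplq hplp, integral_sub hqi hpi, hp1] at h3
  linarith

section Marginal

variable {W α : Type*} [MeasurableSpace W] [MeasurableSpace α]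
  {ρ : Measure W} {ν : Measure α} [SigmaFinite ν]
  {pr : W → α} {p : W → ℝ} {q : α → ℝ}

/-- The marginal density is integrable. -/
lemma marg_integrable (hpr : Measurable pr) (hpm : Measurable p) (hp0 : ∀ w, 0 ≤ p w)
    (hpi : Integrable p ρ) (hqm : Measurable q) (hq0 : ∀ x, 0 ≤ q x)
    (hmarg : ∀ s : Set α, MeasurableSet s →
      (∫ x in s, q x ∂ν) = ∫ w, s.indicator (fun _ => (1 : ℝ)) (pr w) * p w ∂ρ) :
    Integrable q ν := by
  set s : ℕ → Set α := fun n => spanningSets ν n ∩ {x | q x ≤ n} with hs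
  have hsm : ∀ n, MeasurableSet (s n) := fun n =>
    (measurableSet_spanningSets ν n).inter (measurableSet_le hqm measurable_const)
  have hmono : Monotone s := by
    intro a b hab
    exact Set.inter_subset_inter (monotone_spanningSets ν hab)
      (Set.setOf_subset_setOf.2 fun x hx => le_trans hx (Nat.cast_le.2 hab))
  have hunion : (⋃ n, s n) = Set.univ := by
    ext x
    simp only [Set.mem_iUnion, Set.mem_univ, iff_true]
    have hx : x ∈ ⋃ n, spanningSets ν n := by rw [iUnion_spanningSets]; trivial
    obtain ⟨n, hn⟩ := Set.mem_iUnion.1 hx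
    obtain ⟨k, hk⟩ := exists_nat_ge (q x)
    exact ⟨max n k, ⟨monotone_spanningSets ν (le_max_left n k) hn,
      le_trans hk (Nat.cast_le.2 (le_max_right n k))⟩⟩
  -- indicator * p is integrable and ≤ p
  have hind : ∀ t : Set α, MeasurableSet t →
      Integrable (fun w => t.indicator (fun _ => (1 : ℝ)) (pr w) * p w) ρ := by
    intro t ht
    refine Integrable.mono hpi (((measurable_one.indicator ht).comp hpr).mul hpm).aestronglyMeasurable
      (Filter.Eventually.of_forall fun w => ?_)
    rw [Real.norm_eq_abs, Real.norm_eq_abs]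
    rcases Set.indicator_eq_zero_or_self t (fun _ => (1:ℝ)) (pr w) with h | h <;> rw [h] <;>
      simp [abs_mul, abs_of_nonneg (hp0 w), hp0 w]
  have hle : ∀ t : Set α, MeasurableSet t →
      (∫ w, t.indicator (fun _ => (1 : ℝ)) (pr w) * p w ∂ρ) ≤ ∫ w, p w ∂ρ := by
    intro t ht
    refine integral_mono (hind t ht) hpi (fun w => ?_)
    rcases Set.indicator_eq_zero_or_self t (fun _ => (1:ℝ)) (pr w) with h | h <;> rw [h] <;>
      simp [hp0 w]
  -- integrability of q on each s n
  have hion : ∀ n, IntegrableOn q (s n) ν := by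
    intro n
    have hfin : ν (s n) < ⊤ :=
      lt_of_le_of_lt (measure_mono Set.inter_subset_left) (measure_spanningSets_lt_top ν n)
    haveI : IsFiniteMeasure (ν.restrict (s n)) :=
      ⟨by rwa [Measure.restrict_apply_univ]⟩
    refine Integrable.mono' (integrable_const (n : ℝ)) hqm.aestronglyMeasurable ?_
    rw [ae_restrict_iff' (hsm n)]
    exact Filter.Eventually.of_forall fun x hx => by
      rw [Real.norm_eq_abs, abs_of_nonneg (hq0 x)]; exact hx.2
  -- lintegral over s n is bounded
  have hbound : ∀ n, (∫⁻ x in s n, ENNReal.ofReal (q x) ∂ν) ≤ ENNReal.ofReal (∫ w, p w ∂ρ) := by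
    intro n
    rw [← ofReal_integral_eq_lintegral_ofReal (hion n)
      (Filter.Eventually.of_forall fun x => hq0 x)]
    exact ENNReal.ofReal_le_ofReal (le_trans (le_of_eq (hmarg (s n) (hsm n))) (hle _ (hsm n)))
  -- monotone convergence
  have hsup : (∫⁻ x, ENNReal.ofReal (q x) ∂ν) ≤ ENNReal.ofReal (∫ w, p w ∂ρ) := by
    have hpt : ∀ x, (⨆ n, (s n).indicator (fun x => ENNReal.ofReal (q x)) x)
        = ENNReal.ofReal (q x) := by
      intro x
      apply le_antisymm
      · exact iSup_le fun n => Set.indicator_le_self _ _ x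
      · have hx : x ∈ ⋃ n, s n := by rw [hunion]; trivial
        obtain ⟨n, hn⟩ := Set.mem_iUnion.1 hx
        exact le_iSup_of_le n (by rw [Set.indicator_of_mem hn])
    calc (∫⁻ x, ENNReal.ofReal (q x) ∂ν)
        = ∫⁻ x, ⨆ n, (s n).indicator (fun x => ENNReal.ofReal (q x)) x ∂ν := by
          simp_rw [hpt]
      _ = ⨆ n, ∫⁻ x, (s n).indicator (fun x => ENNReal.ofReal (q x)) x ∂ν := by
          refine lintegral_iSup (fun n => (hqm.ennreal_ofReal).indicator (hsm n)) ?_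
          intro a b hab x
          exact Set.indicator_le_indicator_of_subset (hmono hab) (fun _ => zero_le) x
      _ ≤ ENNReal.ofReal (∫ w, p w ∂ρ) := by
          refine iSup_le fun n => ?_
          rw [lintegral_indicator (hsm n)]
          exact hbound n
  refine ⟨hqm.aestronglyMeasurable, ?_⟩
  rw [hasFiniteIntegral_iff_norm]
  have : ∀ x, ENNReal.ofReal ‖q x‖ = ENNReal.ofReal (q x) := fun x => by
    rw [Real.norm_eq_abs, abs_of_nonneg (hq0 x)]
  simp_rw [this]
  exact lt_of_le_of_lt hsup ENNReal.ofReal_lt_top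

/-- The pushforward of the density measure equals the marginal density measure. -/
lemma marg_measure_eq (hpr : Measurable pr) (hpm : Measurable p) (hp0 : ∀ w, 0 ≤ p w)
    (hpi : Integrable p ρ) (hqm : Measurable q) (hq0 : ∀ x, 0 ≤ q x)
    (hmarg : ∀ s : Set α, MeasurableSet s →
      (∫ x in s, q x ∂ν) = ∫ w, s.indicator (fun _ => (1 : ℝ)) (pr w) * p w ∂ρ) :
    (ρ.withDensity (fun w => ENNReal.ofReal (p w))).map pr
      = ν.withDensity (fun x => ENNReal.ofReal (q x)) := by
  have hqi : Integrable q ν := marg_integrable hpr hpm hp0 hpi hqm hq0 hmarg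
  have hind : ∀ t : Set α, MeasurableSet t →
      Integrable (fun w => t.indicator (fun _ => (1 : ℝ)) (pr w) * p w) ρ := by
    intro t ht
    refine Integrable.mono hpi (((measurable_one.indicator ht).comp hpr).mul hpm).aestronglyMeasurable
      (Filter.Eventually.of_forall fun w => ?_)
    rw [Real.norm_eq_abs, Real.norm_eq_abs]
    rcases Set.indicator_eq_zero_or_self t (fun _ => (1:ℝ)) (pr w) with h | h <;> rw [h] <;>
      simp [abs_mul, abs_of_nonneg (hp0 w), hp0 w]
  ext t ht
  rw [Measure.map_apply hpr ht, withDensity_apply _ (hpr ht), withDensity_apply _ ht]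
  have h1 : (∫⁻ w in pr ⁻¹' t, ENNReal.ofReal (p w) ∂ρ)
      = ∫⁻ w, ENNReal.ofReal (t.indicator (fun _ => (1:ℝ)) (pr w) * p w) ∂ρ := by
    rw [← lintegral_indicator (hpr ht)]
    congr 1
    funext w
    classical
    rw [Set.indicator_apply, Set.indicator_apply, Set.mem_preimage]
    by_cases hw : pr w ∈ t
    · simp [hw]
    · simp [hw]
  rw [h1, ← ofReal_integral_eq_lintegral_ofReal (hind t ht)
    (Filter.Eventually.of_forall fun w => by
      exact mul_nonneg (Set.indicator_apply_nonneg fun _ => zero_le_one) (hp0 w)),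
    ← hmarg t ht,
    ofReal_integral_eq_lintegral_ofReal hqi.integrableOn
      (Filter.Eventually.of_forall fun x => hq0 x)]

end Marginal

section Marginal2

variable {W α : Type*} [MeasurableSpace W] [MeasurableSpace α]
  {ρ : Measure W} {ν : Measure α}
  {pr : W → α} {p : W → ℝ} {q : α → ℝ}

lemma marg_lintegral (hpr : Measurable pr)
    (heq : (ρ.withDensity (fun w => ENNReal.ofReal (p w))).map pr
      = ν.withDensity (fun x => ENNReal.ofReal (q x)))
    {ψ : α → ℝ≥0∞} (hψ : Measurable ψ) (hpm : Measurable p) (hqm : Measurable q) :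
    ∫⁻ w, ψ (pr w) * ENNReal.ofReal (p w) ∂ρ = ∫⁻ x, ψ x * ENNReal.ofReal (q x) ∂ν := by
  have h1 : ∫⁻ x, ψ x * ENNReal.ofReal (q x) ∂ν
      = ∫⁻ x, ψ x ∂(ν.withDensity (fun x => ENNReal.ofReal (q x))) := by
    rw [lintegral_withDensity_eq_lintegral_mul ν hqm.ennreal_ofReal hψ]
    congr 1; funext x; exact mul_comm _ _
  rw [h1, ← heq, lintegral_map hψ hpr,
    lintegral_withDensity_eq_lintegral_mul ρ hpm.ennreal_ofReal
      (g := fun w => ψ (pr w)) (hψ.comp hpr)]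
  congr 1; funext w; exact mul_comm _ _

lemma marg_integral (hpr : Measurable pr)
    (heq : (ρ.withDensity (fun w => ENNReal.ofReal (p w))).map pr
      = ν.withDensity (fun x => ENNReal.ofReal (q x)))
    (hp0 : ∀ w, 0 ≤ p w) (hq0 : ∀ x, 0 ≤ q x)
    {φ : α → ℝ} (hφ : Measurable φ) (hpm : Measurable p) (hqm : Measurable q) :
    ∫ w, φ (pr w) * p w ∂ρ = ∫ x, φ x * q x ∂ν := by
  have hpd : (fun w => ENNReal.ofReal (p w)) = fun w => ((Real.toNNReal (p w) : ℝ≥0) : ℝ≥0∞) := by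
    funext w; rfl
  have hqd : (fun x => ENNReal.ofReal (q x)) = fun x => ((Real.toNNReal (q x) : ℝ≥0) : ℝ≥0∞) := by
    funext x; rfl
  have h1 : ∫ x, φ x * q x ∂ν
      = ∫ x, φ x ∂(ν.withDensity (fun x => ENNReal.ofReal (q x))) := by
    rw [hqd, integral_withDensity_eq_integral_smul hqm.real_toNNReal φ]
    congr 1; funext x
    rw [NNReal.smul_def, smul_eq_mul, Real.coe_toNNReal _ (hq0 x), mul_comm]
  have h2 : ∫ w, φ (pr w) * p w ∂ρ
      = ∫ w, φ (pr w) ∂(ρ.withDensity (fun w => ENNReal.ofReal (p w))) := by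
    rw [hpd, integral_withDensity_eq_integral_smul hpm.real_toNNReal (fun w => φ (pr w))]
    congr 1; funext w
    rw [NNReal.smul_def, smul_eq_mul, Real.coe_toNNReal _ (hp0 w), mul_comm]
  rw [h1, h2, ← heq, integral_map hpr.aemeasurable hφ.aestronglyMeasurable]

lemma marg_vanish (hpr : Measurable pr)
    (heq : (ρ.withDensity (fun w => ENNReal.ofReal (p w))).map pr
      = ν.withDensity (fun x => ENNReal.ofReal (q x)))
    (hp0 : ∀ w, 0 ≤ p w) (hpm : Measurable p) (hqm : Measurable q) :
    ∀ᵐ w ∂ρ, q (pr w) = 0 → p w = 0 := by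
  set N : Set α := {x | q x = 0} with hN
  have hNm : MeasurableSet N := hqm (measurableSet_singleton 0)
  have h0 : ∫⁻ w, N.indicator (fun _ => (1 : ℝ≥0∞)) (pr w) * ENNReal.ofReal (p w) ∂ρ = 0 := by
    rw [marg_lintegral (ψ := fun x => N.indicator (fun _ => (1 : ℝ≥0∞)) x) hpr heq
      (measurable_const.indicator hNm) hpm hqm]
    have : ∀ x, N.indicator (fun _ => (1 : ℝ≥0∞)) x * ENNReal.ofReal (q x) = 0 := by
      intro x
      by_cases hx : x ∈ N
      · rw [hx.out, ENNReal.ofReal_zero, mul_zero]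
      · rw [Set.indicator_of_notMem hx, zero_mul]
    simp_rw [this, lintegral_zero]
  have hmeas : Measurable (fun w => N.indicator (fun _ => (1 : ℝ≥0∞)) (pr w)
      * ENNReal.ofReal (p w)) :=
    ((measurable_one.indicator hNm).comp hpr).mul hpm.ennreal_ofReal
  have := (lintegral_eq_zero_iff hmeas).1 h0
  filter_upwards [this] with w hw hq0'
  by_contra hp
  have hplt : 0 < p w := lt_of_le_of_ne (hp0 w) (Ne.symm hp)
  have hmem : pr w ∈ N := hq0'
  rw [Set.indicator_of_mem hmem, one_mul] at hw
  exact absurd hw (by simp [ENNReal.ofReal_eq_zero, not_le, hplt])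

lemma marg_integrable_comp (hpr : Measurable pr)
    (heq : (ρ.withDensity (fun w => ENNReal.ofReal (p w))).map pr
      = ν.withDensity (fun x => ENNReal.ofReal (q x)))
    (hp0 : ∀ w, 0 ≤ p w) (hq0 : ∀ x, 0 ≤ q x)
    {φ : α → ℝ} (hφ : Measurable φ) (hpm : Measurable p) (hqm : Measurable q)
    (hint : Integrable (fun x => φ x * q x) ν) :
    Integrable (fun w => φ (pr w) * p w) ρ := by
  refine ⟨((hφ.comp hpr).mul hpm).aestronglyMeasurable, ?_⟩
  rw [hasFiniteIntegral_iff_norm]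
  have key : ∀ (r : ℝ) (u : ℝ), 0 ≤ u → ENNReal.ofReal ‖r * u‖
      = ENNReal.ofReal |r| * ENNReal.ofReal u := by
    intro r u hu
    rw [Real.norm_eq_abs, abs_mul, abs_of_nonneg hu, ENNReal.ofReal_mul (abs_nonneg r)]
  calc ∫⁻ w, ENNReal.ofReal ‖φ (pr w) * p w‖ ∂ρ
      = ∫⁻ w, (fun x => ENNReal.ofReal |φ x|) (pr w) * ENNReal.ofReal (p w) ∂ρ := by
        congr 1; funext w; exact key _ _ (hp0 w)
    _ = ∫⁻ x, ENNReal.ofReal |φ x| * ENNReal.ofReal (q x) ∂ν :=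
        marg_lintegral hpr heq (hφ.abs.ennreal_ofReal) hpm hqm
    _ = ∫⁻ x, ENNReal.ofReal ‖φ x * q x‖ ∂ν := by
        congr 1; funext x; exact (key _ _ (hq0 x)).symm
    _ < ⊤ := by
        have := hint.2
        rwa [hasFiniteIntegral_iff_norm] at this

end Marginal2

section PiHelpers

lemma pi_integrable {m : ℕ} {Y : Fin m → Type*} [∀ i, MeasurableSpace (Y i)]
    (ν : ∀ i, Measure (Y i)) [∀ i, SigmaFinite (ν i)]
    {f : ∀ i, Y i → ℝ} (hf : ∀ i, Integrable (f i) (ν i)) :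
    Integrable (fun y : ∀ i, Y i => ∏ i, f i (y i)) (Measure.pi ν) := by
  letI : ∀ i, MeasureSpace (Y i) := fun i => ⟨ν i⟩
  haveI : ∀ i, SigmaFinite (volume : Measure (Y i)) := fun i => (inferInstance : SigmaFinite (ν i))
  exact Integrable.fintype_prod_dep hf

lemma pi_integral {m : ℕ} {Y : Fin m → Type*} [∀ i, MeasurableSpace (Y i)]
    (ν : ∀ i, Measure (Y i)) [∀ i, SigmaFinite (ν i)]
    (f : ∀ i, Y i → ℝ) :
    ∫ y : ∀ i, Y i, ∏ i, f i (y i) ∂(Measure.pi ν) = ∏ i, ∫ y, f i y ∂(ν i) := by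
  letI : ∀ i, MeasureSpace (Y i) := fun i => ⟨ν i⟩
  haveI : ∀ i, SigmaFinite (volume : Measure (Y i)) := fun i => (inferInstance : SigmaFinite (ν i))
  exact integral_fintype_prod_eq_prod f

end PiHelpers

section EntropyProd

lemma entropy_prod {X : Type*} [MeasurableSpace X] (μ : Measure X) [SigmaFinite μ]
    {m : ℕ} {Y : Fin m → Type*} [∀ i, MeasurableSpace (Y i)]
    (ν : ∀ i, Measure (Y i)) [∀ i, SigmaFinite (ν i)]
    {fA : X → ℝ} {g : ∀ i, Y i → ℝ}
    (hfA0 : ∀ x, 0 ≤ fA x) (hfAi : Integrable fA μ) (hfA1 : (∫ x, fA x ∂μ) = 1)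
    (hSfA : Integrable (fun x => fA x * Real.log (fA x)) μ)
    (gpos : ∀ i y, 0 < g i y) (gint : ∀ i, Integrable (g i) (ν i))
    (g1 : ∀ i, (∫ y, g i y ∂(ν i)) = 1)
    (hSg : ∀ i, Integrable (fun y => g i y * Real.log (g i y)) (ν i)) :
    ∫ w : X × (∀ i, Y i), (fA w.1 * ∏ i, g i (w.2 i))
        * Real.log (fA w.1 * ∏ i, g i (w.2 i)) ∂(μ.prod (Measure.pi ν))
      = (∫ x, fA x * Real.log (fA x) ∂μ) + ∑ i, ∫ y, g i y * Real.log (g i y) ∂(ν i) := by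
  classical
  have Gpos : ∀ y : ∀ i, Y i, 0 < ∏ i, g i (y i) :=
    fun y => Finset.prod_pos fun i _ => gpos i (y i)
  have Gint : Integrable (fun y : ∀ i, Y i => ∏ i, g i (y i)) (Measure.pi ν) :=
    pi_integrable ν gint
  have G1 : (∫ y : ∀ i, Y i, ∏ i, g i (y i) ∂(Measure.pi ν)) = 1 := by
    rw [pi_integral ν g]
    simp [g1]
  -- the "h i j" family
  set h : Fin m → ∀ j, Y j → ℝ :=
    fun i j => if j = i then (fun z => g j z * Real.log (g j z)) else g j with hh
  have hint : ∀ i j, Integrable (h i j) (ν j) := by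
    intro i j
    by_cases hj : j = i
    · rw [hh]; simp only [if_pos hj]; exact hSg j
    · rw [hh]; simp only [if_neg hj]; exact gint j
  have hprod : ∀ i (y : ∀ j, Y j),
      (∏ j, h i j (y j)) = (∏ j, g j (y j)) * Real.log (g i (y i)) := by
    intro i y
    have h1 : (∏ j, g j (y j))
        = g i (y i) * ∏ j ∈ Finset.univ.erase i, g j (y j) :=
      (Finset.mul_prod_erase _ _ (Finset.mem_univ i)).symm
    have h2 : (∏ j, h i j (y j))
        = (g i (y i) * Real.log (g i (y i))) * ∏ j ∈ Finset.univ.erase i, g j (y j) := by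
      rw [← Finset.mul_prod_erase Finset.univ _ (Finset.mem_univ i)]
      congr 1
      · rw [hh]; simp
      · refine Finset.prod_congr rfl fun j hj => ?_
        rw [hh]; simp only [if_neg (Finset.ne_of_mem_erase hj)]
    rw [h1, h2]; ring
  have hGG : ∀ y : ∀ j, Y j,
      (∏ j, g j (y j)) * Real.log (∏ j, g j (y j)) = ∑ i, ∏ j, h i j (y j) := by
    intro y
    rw [Real.log_prod fun j _ => (gpos j (y j)).ne', Finset.mul_sum]
    exact Finset.sum_congr rfl fun i _ => ((hprod i y).symm)
  have intGGi : ∀ i, Integrable (fun y : ∀ j, Y j => ∏ j, h i j (y j)) (Measure.pi ν) :=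
    fun i => pi_integrable ν (hint i)
  have intGG : Integrable (fun y : ∀ j, Y j =>
      (∏ j, g j (y j)) * Real.log (∏ j, g j (y j))) (Measure.pi ν) := by
    have : (fun y : ∀ j, Y j => (∏ j, g j (y j)) * Real.log (∏ j, g j (y j)))
        = fun y => ∑ i, ∏ j, h i j (y j) := funext fun y => hGG y
    rw [this]
    exact integrable_finset_sum _ fun i _ => intGGi i
  have SGG : (∫ y : ∀ j, Y j, (∏ j, g j (y j)) * Real.log (∏ j, g j (y j)) ∂(Measure.pi ν))
      = ∑ i, ∫ y, g i y * Real.log (g i y) ∂(ν i) := by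
    have e1 : (∫ y : ∀ j, Y j, (∏ j, g j (y j)) * Real.log (∏ j, g j (y j)) ∂(Measure.pi ν))
        = ∑ i, ∫ y : ∀ j, Y j, ∏ j, h i j (y j) ∂(Measure.pi ν) := by
      rw [integral_congr_ae (Filter.Eventually.of_forall hGG)]
      exact integral_finset_sum _ fun i _ => intGGi i
    rw [e1]
    refine Finset.sum_congr rfl fun i _ => ?_
    rw [pi_integral ν (h i)]
    have : ∀ j ∈ Finset.univ.erase i, (∫ y, h i j y ∂(ν j)) = 1 := by
      intro j hj
      rw [hh]; simp only [if_neg (Finset.ne_of_mem_erase hj)]; exact g1 j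
    rw [← Finset.mul_prod_erase _ _ (Finset.mem_univ i), Finset.prod_congr rfl this]
    have : (∫ y, h i i y ∂(ν i)) = ∫ y, g i y * Real.log (g i y) ∂(ν i) := by
      rw [hh]; simp
    rw [this, Finset.prod_const_one, mul_one]
  -- pointwise decomposition
  have hpt : ∀ w : X × (∀ i, Y i),
      (fA w.1 * ∏ i, g i (w.2 i)) * Real.log (fA w.1 * ∏ i, g i (w.2 i))
      = (fA w.1 * Real.log (fA w.1)) * (∏ i, g i (w.2 i))
        + fA w.1 * ((∏ i, g i (w.2 i)) * Real.log (∏ i, g i (w.2 i))) := by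
    intro w
    by_cases hx : fA w.1 = 0
    · simp [hx]
    · rw [Real.log_mul hx (Gpos w.2).ne']; ring
  rw [integral_congr_ae (Filter.Eventually.of_forall hpt),
    integral_add (hSfA.mul_prod Gint) (hfAi.mul_prod intGG),
    integral_prod_mul (fun x => fA x * Real.log (fA x)) (fun y : ∀ j, Y j => ∏ i, g i (y i)),
    integral_prod_mul fA
      (fun y : ∀ j, Y j => (∏ j, g j (y j)) * Real.log (∏ j, g j (y j))),
    hfA1, G1, SGG, mul_one, one_mul]

end EntropyProd


/-- Fundamental Theorem of Statistical Mechanics (classical version): a system `A` with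
density `f_A`, initially uncorrelated with reservoirs `B i` having canonical densities
`g i = Z i⁻¹ e^{-β i • H i}`, evolves jointly by a measure-preserving equivalence `Φ`.
With `Q i` the expected heat gained from reservoir `i` (decrease of `⟨H i⟩`), and
marginals `fA'`, `g' i` of the final joint density, one has
`∑ i, β i * Q i ≤ S[fA'] - S[fA]`, where `S[f] = -∫ f log f`. -/
theorem fundamental_theorem_statistical_mechanics
    {X : Type*} [MeasurableSpace X] (μ : Measure X) [SigmaFinite μ]
    (m : ℕ) {Y : Fin m → Type*} [∀ i, MeasurableSpace (Y i)]
    (ν : ∀ i, Measure (Y i)) [∀ i, SigmaFinite (ν i)]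
    (H : ∀ i, Y i → ℝ) (hH : ∀ i, Measurable (H i))
    (β : Fin m → ℝ) (hβ : ∀ i, 0 < β i)
    (hexp : ∀ i, Integrable (fun y => Real.exp (-β i * H i y)) (ν i))
    (Z : Fin m → ℝ) (hZ : ∀ i, Z i = ∫ y, Real.exp (-β i * H i y) ∂(ν i))
    (hZpos : ∀ i, 0 < Z i)
    (g : ∀ i, Y i → ℝ) (hg : ∀ i, g i = fun y => (Z i)⁻¹ * Real.exp (-β i * H i y))
    -- the initial density of the system A
    (fA : X → ℝ) (hfAm : Measurable fA) (hfA0 : ∀ x, 0 ≤ fA x)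
    (hfAi : Integrable fA μ) (hfA1 : (∫ x, fA x ∂μ) = 1)
    -- initial joint density: product (no initial correlations)
    (f₀ : X × (∀ i, Y i) → ℝ) (hf₀ : f₀ = fun w => fA w.1 * ∏ i, g i (w.2 i))
    -- Hamiltonian evolution: a measure-preserving measurable equivalence
    (Φ : (X × (∀ i, Y i)) ≃ᵐ (X × (∀ i, Y i)))
    (hΦ : MeasurePreserving Φ (μ.prod (Measure.pi ν)) (μ.prod (Measure.pi ν)))
    (f₁ : X × (∀ i, Y i) → ℝ) (hf₁ : f₁ = fun w => f₀ (Φ.symm w))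
    -- final marginal density of the system A
    (fA' : X → ℝ) (hfA'm : Measurable fA') (hfA'0 : ∀ x, 0 ≤ fA' x)
    (hfA'marg : ∀ s : Set X, MeasurableSet s →
      (∫ x in s, fA' x ∂μ) =
        ∫ w, s.indicator (fun _ => (1 : ℝ)) w.1 * f₁ w ∂(μ.prod (Measure.pi ν)))
    -- final marginal densities of the reservoirs
    (g' : ∀ i, Y i → ℝ) (hg'm : ∀ i, Measurable (g' i)) (hg'0 : ∀ i y, 0 ≤ g' i y)
    (hg'marg : ∀ i, ∀ s : Set (Y i), MeasurableSet s →
      (∫ y in s, g' i y ∂(ν i)) =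
        ∫ w, s.indicator (fun _ => (1 : ℝ)) (w.2 i) * f₁ w ∂(μ.prod (Measure.pi ν)))
    -- finiteness of the entropy integrals
    (hSfA : Integrable (fun x => fA x * Real.log (fA x)) μ)
    (hSfA' : Integrable (fun x => fA' x * Real.log (fA' x)) μ)
    (hSg : ∀ i, Integrable (fun y => g i y * Real.log (g i y)) (ν i))
    (hSg' : ∀ i, Integrable (fun y => g' i y * Real.log (g' i y)) (ν i))
    (hSf₁ : Integrable (fun w => f₁ w * Real.log (f₁ w)) (μ.prod (Measure.pi ν)))
    -- finiteness of the energy integrals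
    (hEg : ∀ i, Integrable (fun y => H i y * g i y) (ν i))
    (hEg' : ∀ i, Integrable (fun y => H i y * g' i y) (ν i))
    -- expected heat gained by the system from reservoir i
    (Q : Fin m → ℝ)
    (hQ : ∀ i, Q i = (∫ y, H i y * g i y ∂(ν i)) - ∫ y, H i y * g' i y ∂(ν i)) :
    ∑ i, β i * Q i ≤
      (-∫ x, fA' x * Real.log (fA' x) ∂μ) - (-∫ x, fA x * Real.log (fA x) ∂μ) := by
  classical
  -- basic facts about the canonical densities
  have gm : ∀ i, Measurable (g i) := by
    intro i; rw [hg i]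
    exact (((hH i).const_mul (-β i)).exp.const_mul _)
  have gpos : ∀ i y, 0 < g i y := by
    intro i y; rw [hg i]
    exact mul_pos (inv_pos.2 (hZpos i)) (Real.exp_pos _)
  have gint : ∀ i, Integrable (g i) (ν i) := by
    intro i; rw [hg i]; exact (hexp i).const_mul _
  have g1 : ∀ i, (∫ y, g i y ∂(ν i)) = 1 := by
    intro i; rw [hg i]
    rw [integral_const_mul, ← hZ i, inv_mul_cancel₀ (hZpos i).ne']
  have glog : ∀ i y, Real.log (g i y) = -Real.log (Z i) - β i * H i y := by
    intro i y; rw [hg i]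
    simp only
    rw [Real.log_mul (inv_ne_zero (hZpos i).ne') (Real.exp_ne_zero _), Real.log_inv,
      Real.log_exp]
    ring
  -- product density facts
  have Gm : Measurable (fun y : ∀ i, Y i => ∏ i, g i (y i)) :=
    Finset.measurable_prod _ fun i _ => (gm i).comp (measurable_pi_apply i)
  have Gpos : ∀ y : ∀ i, Y i, 0 < ∏ i, g i (y i) :=
    fun y => Finset.prod_pos fun i _ => gpos i (y i)
  have Gint : Integrable (fun y : ∀ i, Y i => ∏ i, g i (y i)) (Measure.pi ν) :=
    pi_integrable ν gint
  have G1 : (∫ y : ∀ i, Y i, ∏ i, g i (y i) ∂(Measure.pi ν)) = 1 := by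
    rw [pi_integral ν g]; simp [g1]
  -- facts about f₀
  have f₀m : Measurable f₀ := by
    rw [hf₀]; exact (hfAm.comp measurable_fst).mul (Gm.comp measurable_snd)
  have f₀0 : ∀ w, 0 ≤ f₀ w := by
    intro w; rw [hf₀]
    exact mul_nonneg (hfA0 w.1) (Gpos w.2).le
  have f₀int : Integrable f₀ (μ.prod (Measure.pi ν)) := by
    rw [hf₀]; exact hfAi.mul_prod Gint
  have f₀1 : (∫ w, f₀ w ∂(μ.prod (Measure.pi ν))) = 1 := by
    rw [hf₀, integral_prod_mul fA (fun y : ∀ i, Y i => ∏ i, g i (y i)), hfA1, G1, mul_one]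
  -- facts about f₁
  have hΦs : MeasurePreserving Φ.symm (μ.prod (Measure.pi ν)) (μ.prod (Measure.pi ν)) :=
    hΦ.symm Φ
  have f₁m : Measurable f₁ := by
    rw [hf₁]; exact f₀m.comp Φ.symm.measurable
  have f₁0 : ∀ w, 0 ≤ f₁ w := by
    intro w; rw [hf₁]; exact f₀0 _
  have f₁int : Integrable f₁ (μ.prod (Measure.pi ν)) := by
    rw [hf₁]
    exact (hΦs.integrable_comp_emb Φ.symm.measurableEmbedding).2 f₀int
  have f₁1 : (∫ w, f₁ w ∂(μ.prod (Measure.pi ν))) = 1 := by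
    rw [hf₁, hΦs.integral_comp Φ.symm.measurableEmbedding f₀, f₀1]
  have S1eq : (∫ w, f₁ w * Real.log (f₁ w) ∂(μ.prod (Measure.pi ν)))
      = ∫ w, f₀ w * Real.log (f₀ w) ∂(μ.prod (Measure.pi ν)) := by
    rw [hf₁]
    exact hΦs.integral_comp Φ.symm.measurableEmbedding (fun w => f₀ w * Real.log (f₀ w))
  -- marginal machinery for A
  have heqA : ((μ.prod (Measure.pi ν)).withDensity (fun w => ENNReal.ofReal (f₁ w))).map
        Prod.fst = μ.withDensity (fun x => ENNReal.ofReal (fA' x)) :=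
    marg_measure_eq measurable_fst f₁m f₁0 f₁int hfA'm hfA'0 hfA'marg
  have fA'int : Integrable fA' μ :=
    marg_integrable measurable_fst f₁m f₁0 f₁int hfA'm hfA'0 hfA'marg
  have intA : ∀ {φ : X → ℝ}, Measurable φ →
      (∫ w, φ w.1 * f₁ w ∂(μ.prod (Measure.pi ν))) = ∫ x, φ x * fA' x ∂μ :=
    fun hφ => marg_integral measurable_fst heqA f₁0 hfA'0 hφ f₁m hfA'm
  have fA'1 : (∫ x, fA' x ∂μ) = 1 := by
    have := intA measurable_const (φ := fun _ => (1 : ℝ))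
    simpa [f₁1] using this.symm
  have vanishA : ∀ᵐ w ∂(μ.prod (Measure.pi ν)), fA' w.1 = 0 → f₁ w = 0 :=
    marg_vanish measurable_fst heqA f₁0 f₁m hfA'm
  -- marginal machinery for the reservoirs
  have prim : ∀ i, Measurable (fun w : X × (∀ i, Y i) => w.2 i) :=
    fun i => (measurable_pi_apply i).comp measurable_snd
  have heqB : ∀ i, ((μ.prod (Measure.pi ν)).withDensity
        (fun w => ENNReal.ofReal (f₁ w))).map (fun w => w.2 i)
      = (ν i).withDensity (fun y => ENNReal.ofReal (g' i y)) :=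
    fun i => marg_measure_eq (prim i) f₁m f₁0 f₁int (hg'm i) (hg'0 i) (hg'marg i)
  have g'int : ∀ i, Integrable (g' i) (ν i) :=
    fun i => marg_integrable (prim i) f₁m f₁0 f₁int (hg'm i) (hg'0 i) (hg'marg i)
  have intB : ∀ i, ∀ {φ : Y i → ℝ}, Measurable φ →
      (∫ w, φ (w.2 i) * f₁ w ∂(μ.prod (Measure.pi ν))) = ∫ y, φ y * g' i y ∂(ν i) :=
    fun i => fun hφ => marg_integral (prim i) (heqB i) f₁0 (hg'0 i) hφ f₁m (hg'm i)
  have g'1 : ∀ i, (∫ y, g' i y ∂(ν i)) = 1 := by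
    intro i
    have := intB i measurable_const (φ := fun _ => (1 : ℝ))
    simpa [f₁1] using this.symm
  -- Piece 1 : entropy of the initial product density
  have S0 : (∫ w, f₀ w * Real.log (f₀ w) ∂(μ.prod (Measure.pi ν)))
      = (∫ x, fA x * Real.log (fA x) ∂μ) + ∑ i, ∫ y, g i y * Real.log (g i y) ∂(ν i) := by
    rw [hf₀]
    exact entropy_prod μ ν hfA0 hfAi hfA1 hSfA gpos gint g1 hSg
  -- Piece 2 : decomposition of ∫ f₁ log h, h = fA'(x) * ∏ g i (y i)
  have aeid : ∀ᵐ w ∂(μ.prod (Measure.pi ν)),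
      f₁ w * Real.log (fA' w.1 * ∏ i, g i (w.2 i))
      = Real.log (fA' w.1) * f₁ w + ∑ i, Real.log (g i (w.2 i)) * f₁ w := by
    filter_upwards [vanishA] with w hw
    by_cases hx : fA' w.1 = 0
    · rw [hw hx]; simp
    · rw [Real.log_mul hx (Gpos w.2).ne',
        Real.log_prod fun i _ => (gpos i _).ne', mul_add, Finset.mul_sum,
        mul_comm (f₁ w)]
      congr 1
      exact Finset.sum_congr rfl fun i _ => mul_comm _ _
  have intdecompA : Integrable (fun w => Real.log (fA' w.1) * f₁ w) (μ.prod (Measure.pi ν)) := by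
    refine marg_integrable_comp measurable_fst heqA f₁0 hfA'0 hfA'm.log f₁m hfA'm ?_
    have : (fun x => Real.log (fA' x) * fA' x) = fun x => fA' x * Real.log (fA' x) :=
      funext fun x => mul_comm _ _
    rw [this]; exact hSfA'
  have intdecompB : ∀ i, Integrable (fun w => Real.log (g i (w.2 i)) * f₁ w)
      (μ.prod (Measure.pi ν)) := by
    intro i
    refine marg_integrable_comp (prim i) (heqB i) f₁0 (hg'0 i) (gm i).log f₁m (hg'm i) ?_
    have : (fun y => Real.log (g i y) * g' i y)
        = fun y => (-Real.log (Z i)) * g' i y - β i * (H i y * g' i y) :=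
      funext fun y => by rw [glog i y]; ring
    rw [this]
    exact ((g'int i).const_mul _).sub ((hEg' i).const_mul _)
  have int_f₁logh : Integrable (fun w => f₁ w * Real.log (fA' w.1 * ∏ i, g i (w.2 i)))
      (μ.prod (Measure.pi ν)) := by
    have intsum : Integrable (fun w => Real.log (fA' w.1) * f₁ w
        + ∑ i, Real.log (g i (w.2 i)) * f₁ w) (μ.prod (Measure.pi ν)) :=
      intdecompA.add (integrable_finset_sum _ fun i _ => intdecompB i)
    refine Integrable.congr intsum ?_
    filter_upwards [aeid] with w hw
    exact hw.symm
  have val_f₁logh : (∫ w, f₁ w * Real.log (fA' w.1 * ∏ i, g i (w.2 i))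
        ∂(μ.prod (Measure.pi ν)))
      = (∫ x, fA' x * Real.log (fA' x) ∂μ)
        + ∑ i, ∫ y, Real.log (g i y) * g' i y ∂(ν i) := by
    rw [integral_congr_ae aeid,
      integral_add intdecompA (integrable_finset_sum _ fun i _ => intdecompB i),
      integral_finset_sum _ fun i _ => intdecompB i]
    congr 1
    · rw [intA hfA'm.log]
      exact integral_congr_ae (Filter.Eventually.of_forall fun x => mul_comm _ _)
    · exact Finset.sum_congr rfl fun i _ => intB i (gm i).log
  -- Gibbs' inequality on the joint space
  have gibbs_b : (∫ w, f₁ w * Real.log (fA' w.1 * ∏ i, g i (w.2 i)) ∂(μ.prod (Measure.pi ν)))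
      ≤ ∫ w, f₁ w * Real.log (f₁ w) ∂(μ.prod (Measure.pi ν)) := by
    refine gibbs_ineq f₁0 (fun w => mul_nonneg (hfA'0 w.1) (Gpos w.2).le) f₁int
      (fA'int.mul_prod Gint) hSf₁ int_f₁logh f₁1 ?_ ?_
    · rw [integral_prod_mul fA' (fun y : ∀ i, Y i => ∏ i, g i (y i)), fA'1, G1, mul_one]
    · filter_upwards [vanishA] with w hw h0'
      exact hw ((mul_eq_zero.1 h0').resolve_right (Gpos w.2).ne')
  -- reservoir energy computations
  have Eg : ∀ i, (∫ y, g i y * Real.log (g i y) ∂(ν i))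
      = -Real.log (Z i) - β i * ∫ y, H i y * g i y ∂(ν i) := by
    intro i
    have : (fun y => g i y * Real.log (g i y))
        = fun y => (-Real.log (Z i)) * g i y - β i * (H i y * g i y) :=
      funext fun y => by rw [glog i y]; ring
    rw [this, integral_sub ((gint i).const_mul _) ((hEg i).const_mul _),
      integral_const_mul, integral_const_mul, g1 i, mul_one]
  have Eg' : ∀ i, (∫ y, Real.log (g i y) * g' i y ∂(ν i))
      = -Real.log (Z i) - β i * ∫ y, H i y * g' i y ∂(ν i) := by
    intro i
    have : (fun y => Real.log (g i y) * g' i y)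
        = fun y => (-Real.log (Z i)) * g' i y - β i * (H i y * g' i y) :=
      funext fun y => by rw [glog i y]; ring
    rw [this, integral_sub ((g'int i).const_mul _) ((hEg' i).const_mul _),
      integral_const_mul, integral_const_mul, g'1 i, mul_one]
  -- final assembly
  have key : (∫ x, fA' x * Real.log (fA' x) ∂μ)
        + ∑ i, (-Real.log (Z i) - β i * ∫ y, H i y * g' i y ∂(ν i))
      ≤ (∫ x, fA x * Real.log (fA x) ∂μ)
        + ∑ i, (-Real.log (Z i) - β i * ∫ y, H i y * g i y ∂(ν i)) := by
    calc (∫ x, fA' x * Real.log (fA' x) ∂μ)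
          + ∑ i, (-Real.log (Z i) - β i * ∫ y, H i y * g' i y ∂(ν i))
        = (∫ x, fA' x * Real.log (fA' x) ∂μ)
          + ∑ i, ∫ y, Real.log (g i y) * g' i y ∂(ν i) := by
          rw [Finset.sum_congr rfl fun i _ => (Eg' i).symm]
      _ = ∫ w, f₁ w * Real.log (fA' w.1 * ∏ i, g i (w.2 i)) ∂(μ.prod (Measure.pi ν)) :=
          val_f₁logh.symm
      _ ≤ ∫ w, f₁ w * Real.log (f₁ w) ∂(μ.prod (Measure.pi ν)) := gibbs_b
      _ = ∫ w, f₀ w * Real.log (f₀ w) ∂(μ.prod (Measure.pi ν)) := S1eq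
      _ = (∫ x, fA x * Real.log (fA x) ∂μ)
          + ∑ i, ∫ y, g i y * Real.log (g i y) ∂(ν i) := S0
      _ = (∫ x, fA x * Real.log (fA x) ∂μ)
          + ∑ i, (-Real.log (Z i) - β i * ∫ y, H i y * g i y ∂(ν i)) := by
          rw [Finset.sum_congr rfl fun i _ => Eg i]
  have hQsum : ∑ i, β i * Q i
      = (∑ i, β i * ∫ y, H i y * g i y ∂(ν i))
        - ∑ i, β i * ∫ y, H i y * g' i y ∂(ν i) := by
    rw [← Finset.sum_sub_distrib]
    exact Finset.sum_congr rfl fun i _ => by rw [hQ i]; ring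
  have hsub1 : ∑ i, (-Real.log (Z i) - β i * ∫ y, H i y * g' i y ∂(ν i))
      = (∑ i, -Real.log (Z i)) - ∑ i, β i * ∫ y, H i y * g' i y ∂(ν i) :=
    Finset.sum_sub_distrib _ _
  have hsub2 : ∑ i, (-Real.log (Z i) - β i * ∫ y, H i y * g i y ∂(ν i))
      = (∑ i, -Real.log (Z i)) - ∑ i, β i * ∫ y, H i y * g i y ∂(ν i) :=
    Finset.sum_sub_distrib _ _
  rw [hsub1, hsub2] at key
  rw [hQsum]
  linarith
end

section
/- (Statistical second law.) In the setting of the classical Fundamental Theorem—system density f_A on (X, μ); reservoirs (Y_i, ν_i) with Hamiltonians H_i, inverse temperatures β_i > 0, canonical initial densities g_i = Z_i⁻¹ e^{-β_i H_i}; initial joint density the product f_A ⊗ g_1 ⊗ ⋯ ⊗ g_m; measure-preserving measurable equivalence Φ of the product space; final joint density f₁ with marginals f_A', g_i'; heats Q_i = ∫ H_i g_i dν_i - ∫ H_i g_i' dν_i; and all the relevant entropy and energy integrals finite—suppose additionally the process is cyclic, i.e., f_A' = f_A μ-almost everywhere. Then ∑_{i=1}^m β_i Q_i ≤ 0; that is,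 the sum over reservoirs of (expected heat gained)/(temperature) is not positive for any cyclic process. -/
open MeasureTheory


lemma gibbs_pointwise_s11 {a b : ℝ} (ha : 0 ≤ a) (hb : 0 < b) :
    a - b ≤ a * Real.log a - a * Real.log b := by
  rcases eq_or_lt_of_le ha with h | h
  · simp only [← h, zero_mul, sub_zero, zero_sub, neg_nonpos]
    linarith
  · have h1 : Real.log (b / a) ≤ b / a - 1 := Real.log_le_sub_one_of_pos (div_pos hb h)
    rw [Real.log_div (ne_of_gt hb) (ne_of_gt h)] at h1
    have h2 := mul_le_mul_of_nonneg_left h1 h.le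
    have h3 : a * (b / a - 1) = b - a := by field_simp
    rw [h3] at h2
    nlinarith

lemma integrable_of_bddSetIntegral {γ : Type*} [MeasurableSpace γ] {Q : Measure γ}
    [SigmaFinite Q] {G : γ → ℝ} (hGm : Measurable G) (hG0 : ∀ y, 0 ≤ G y) {C : ℝ}
    (hC : ∀ s : Set γ, MeasurableSet s → (∫ y in s, G y ∂Q) ≤ C) :
    Integrable G Q := by
  set s : ℕ → Set γ := fun n => spanningSets Q n ∩ {y | G y ≤ n} with hs
  have hsm : ∀ n, MeasurableSet (s n) := fun n =>
    (measurableSet_spanningSets Q n).inter (hGm measurableSet_Iic)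
  have hGint : ∀ n, IntegrableOn G (s n) Q := by
    intro n
    apply Measure.integrableOn_of_bounded (M := n)
    · exact ((measure_mono Set.inter_subset_left).trans_lt (measure_spanningSets_lt_top Q n)).ne
    · exact hGm.aestronglyMeasurable
    · refine (ae_restrict_iff' (hsm n)).2 (ae_of_all _ fun y hy => ?_)
      rw [Real.norm_eq_abs, abs_of_nonneg (hG0 y)]
      exact hy.2
  have hmono : Monotone s := by
    intro a b hab
    exact Set.inter_subset_inter (monotone_spanningSets Q hab)
      (fun y hy => Set.mem_setOf.2 (le_trans (Set.mem_setOf.1 hy) (Nat.cast_le.2 hab)))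
  have hcover : ∀ y, ∃ n, y ∈ s n := by
    intro y
    obtain ⟨k, hk⟩ : ∃ k, y ∈ spanningSets Q k := by
      have := iUnion_spanningSets Q
      have : y ∈ ⋃ n, spanningSets Q n := this.symm ▸ Set.mem_univ y
      exact Set.mem_iUnion.1 this
    obtain ⟨l, hl⟩ := exists_nat_ge (G y)
    exact ⟨max k l, monotone_spanningSets Q (le_max_left k l) hk,
      hl.trans (Nat.cast_le.2 (le_max_right k l))⟩
  have key : ∫⁻ y, ENNReal.ofReal (G y) ∂Q ≤ ENNReal.ofReal C := by
    have heq : ∫⁻ y, ENNReal.ofReal (G y) ∂Q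
        = ⨆ n, ∫⁻ y in s n, ENNReal.ofReal (G y) ∂Q := by
      have h1 : ∀ y, (⨆ n, (s n).indicator (fun y => ENNReal.ofReal (G y)) y)
          = ENNReal.ofReal (G y) := by
        intro y
        obtain ⟨n, hn⟩ := hcover y
        apply le_antisymm
        · exact iSup_le fun k => Set.indicator_le_self _ _ y
        · exact le_iSup_of_le n (by rw [Set.indicator_of_mem hn])
      calc ∫⁻ y, ENNReal.ofReal (G y) ∂Q
          = ∫⁻ y, ⨆ n, (s n).indicator (fun y => ENNReal.ofReal (G y)) y ∂Q := by
            simp_rw [h1]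
        _ = ⨆ n, ∫⁻ y, (s n).indicator (fun y => ENNReal.ofReal (G y)) y ∂Q := by
            refine lintegral_iSup (fun n => ?_) (fun a b hab y => ?_)
            · exact (ENNReal.measurable_ofReal.comp hGm).indicator (hsm n)
            · exact Set.indicator_le_indicator_of_subset (hmono hab) (fun _ => zero_le) y
        _ = ⨆ n, ∫⁻ y in s n, ENNReal.ofReal (G y) ∂Q := by
            simp_rw [lintegral_indicator (hsm _)]
    rw [heq]
    refine iSup_le fun n => ?_
    rw [← ofReal_integral_eq_lintegral_ofReal (hGint n)
      (ae_of_all _ fun y => hG0 y)]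
    exact ENNReal.ofReal_le_ofReal (hC (s n) (hsm n))
  refine ⟨hGm.aestronglyMeasurable, ?_⟩
  rw [hasFiniteIntegral_iff_norm]
  calc ∫⁻ y, ENNReal.ofReal ‖G y‖ ∂Q = ∫⁻ y, ENNReal.ofReal (G y) ∂Q := by
        congr 1; funext y; rw [Real.norm_eq_abs, abs_of_nonneg (hG0 y)]
    _ ≤ ENNReal.ofReal C := key
    _ < ⊤ := ENNReal.ofReal_lt_top
open scoped NNReal ENNReal

lemma marg_transfer {α γ : Type*} [MeasurableSpace α] [MeasurableSpace γ]
    {P : Measure α} {Q : Measure γ} {p : α → γ} (hp : Measurable p)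
    {F : α → ℝ} (hFm : Measurable F) (hF0 : ∀ w, 0 ≤ F w) (hFi : Integrable F P)
    {G : γ → ℝ} (hGm : Measurable G) (hG0 : ∀ y, 0 ≤ G y) (hGi : Integrable G Q)
    (hmarg : ∀ s : Set γ, MeasurableSet s →
      (∫ y in s, G y ∂Q) = ∫ w, s.indicator (fun _ => (1:ℝ)) (p w) * F w ∂P) :
    (P.withDensity (fun w => ENNReal.ofReal (F w))).map p
      = Q.withDensity (fun y => ENNReal.ofReal (G y)) := by
  ext s hs
  rw [Measure.map_apply hp hs, withDensity_apply _ (hp hs), withDensity_apply _ hs]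
  have h1 : ∫⁻ y in s, ENNReal.ofReal (G y) ∂Q = ENNReal.ofReal (∫ y in s, G y ∂Q) :=
    (ofReal_integral_eq_lintegral_ofReal hGi.restrict (ae_of_all _ fun y => hG0 y)).symm
  have h2 : ∫⁻ w in p ⁻¹' s, ENNReal.ofReal (F w) ∂P
      = ENNReal.ofReal (∫ w in p ⁻¹' s, F w ∂P) :=
    (ofReal_integral_eq_lintegral_ofReal hFi.restrict (ae_of_all _ fun w => hF0 w)).symm
  rw [h1, h2, hmarg s hs]
  congr 1
  rw [← integral_indicator (hp hs)]
  congr 1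
  funext w
  by_cases hw : p w ∈ s
  · simp [Set.indicator_of_mem hw, Set.indicator_of_mem (Set.mem_preimage.2 hw)]
  · have hw' : w ∉ p ⁻¹' s := hw
    rw [Set.indicator_of_notMem hw, Set.indicator_of_notMem hw', zero_mul]

lemma transfer_integral {α γ : Type*} [MeasurableSpace α] [MeasurableSpace γ]
    {P : Measure α} {Q : Measure γ} {p : α → γ} (hp : Measurable p)
    {F : α → ℝ} (hFm : Measurable F) (hF0 : ∀ w, 0 ≤ F w)
    {G : γ → ℝ} (hGm : Measurable G) (hG0 : ∀ y, 0 ≤ G y)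
    (hmap : (P.withDensity (fun w => ENNReal.ofReal (F w))).map p
      = Q.withDensity (fun y => ENNReal.ofReal (G y)))
    (φ : γ → ℝ) (hφ : Measurable φ) :
    (∫ w, φ (p w) * F w ∂P = ∫ y, φ y * G y ∂Q) ∧
    (Integrable (fun w => φ (p w) * F w) P ↔ Integrable (fun y => φ y * G y) Q) := by
  have hFnn : Measurable (fun w => Real.toNNReal (F w)) := hFm.real_toNNReal
  have hGnn : Measurable (fun y => Real.toNNReal (G y)) := hGm.real_toNNReal
  have hWF : (fun w => ENNReal.ofReal (F w)) = (fun w => ((Real.toNNReal (F w) : ℝ≥0) : ℝ≥0∞)) :=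
    rfl
  have hWG : (fun y => ENNReal.ofReal (G y)) = (fun y => ((Real.toNNReal (G y) : ℝ≥0) : ℝ≥0∞)) :=
    rfl
  have hsmulF : ∀ w, Real.toNNReal (F w) • φ (p w) = φ (p w) * F w := by
    intro w
    rw [NNReal.smul_def, smul_eq_mul, Real.coe_toNNReal _ (hF0 w), mul_comm]
  have hsmulG : ∀ y, Real.toNNReal (G y) • φ y = φ y * G y := by
    intro y
    rw [NNReal.smul_def, smul_eq_mul, Real.coe_toNNReal _ (hG0 y), mul_comm]
  constructor
  · calc ∫ w, φ (p w) * F w ∂P = ∫ w, Real.toNNReal (F w) • φ (p w) ∂P := by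
          simp_rw [hsmulF]
      _ = ∫ a, φ (p a) ∂(P.withDensity (fun w => ENNReal.ofReal (F w))) := by
          rw [hWF, integral_withDensity_eq_integral_smul hFnn]
      _ = ∫ y, φ y ∂((P.withDensity (fun w => ENNReal.ofReal (F w))).map p) := by
          rw [integral_map hp.aemeasurable hφ.aestronglyMeasurable]
      _ = ∫ y, φ y ∂(Q.withDensity (fun y => ENNReal.ofReal (G y))) := by rw [hmap]
      _ = ∫ y, Real.toNNReal (G y) • φ y ∂Q := by
          rw [hWG, integral_withDensity_eq_integral_smul hGnn]
      _ = ∫ y, φ y * G y ∂Q := by simp_rw [hsmulG]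
  · calc Integrable (fun w => φ (p w) * F w) P
        ↔ Integrable (fun w => Real.toNNReal (F w) • φ (p w)) P := by
          constructor <;> intro h
          · exact h.congr (ae_of_all _ fun w => (hsmulF w).symm)
          · exact h.congr (ae_of_all _ fun w => hsmulF w)
      _ ↔ Integrable (fun a => φ (p a)) (P.withDensity (fun w => ENNReal.ofReal (F w))) := by
          rw [hWF, integrable_withDensity_iff_integrable_smul hFnn]
      _ ↔ Integrable φ ((P.withDensity (fun w => ENNReal.ofReal (F w))).map p) := by
          rw [integrable_map_measure hφ.aestronglyMeasurable hp.aemeasurable]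
          rfl
      _ ↔ Integrable φ (Q.withDensity (fun y => ENNReal.ofReal (G y))) := by rw [hmap]
      _ ↔ Integrable (fun y => Real.toNNReal (G y) • φ y) Q := by
          rw [hWG, integrable_withDensity_iff_integrable_smul hGnn]
      _ ↔ Integrable (fun y => φ y * G y) Q := by
          constructor <;> intro h
          · exact h.congr (ae_of_all _ fun y => hsmulG y)
          · exact h.congr (ae_of_all _ fun y => (hsmulG y).symm)

/-- The statistical second law: in the setting of the classical Fundamental Theorem,
if the process is cyclic (the final marginal density of the system equals the initial
one almost everywhere), then the sum over reservoirs of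
(expected heat gained)/(temperature) is not positive: `∑ i, β i * Q i ≤ 0`. -/
theorem statistical_second_law
    {X : Type*} [MeasurableSpace X] (μ : Measure X) [SigmaFinite μ]
    (m : ℕ) {Y : Fin m → Type*} [∀ i, MeasurableSpace (Y i)]
    (ν : ∀ i, Measure (Y i)) [∀ i, SigmaFinite (ν i)]
    (H : ∀ i, Y i → ℝ) (hH : ∀ i, Measurable (H i))
    (β : Fin m → ℝ) (hβ : ∀ i, 0 < β i)
    (hexp : ∀ i, Integrable (fun y => Real.exp (-β i * H i y)) (ν i))
    (Z : Fin m → ℝ) (hZ : ∀ i, Z i = ∫ y, Real.exp (-β i * H i y) ∂(ν i))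
    (hZpos : ∀ i, 0 < Z i)
    (g : ∀ i, Y i → ℝ) (hg : ∀ i, g i = fun y => (Z i)⁻¹ * Real.exp (-β i * H i y))
    -- the initial density of the system A
    (fA : X → ℝ) (hfAm : Measurable fA) (hfA0 : ∀ x, 0 ≤ fA x)
    (hfAi : Integrable fA μ) (hfA1 : (∫ x, fA x ∂μ) = 1)
    -- initial joint density: product (no initial correlations)
    (f₀ : X × (∀ i, Y i) → ℝ) (hf₀ : f₀ = fun w => fA w.1 * ∏ i, g i (w.2 i))
    -- Hamiltonian evolution: a measure-preserving measurable equivalence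
    (Φ : (X × (∀ i, Y i)) ≃ᵐ (X × (∀ i, Y i)))
    (hΦ : MeasurePreserving Φ (μ.prod (Measure.pi ν)) (μ.prod (Measure.pi ν)))
    (f₁ : X × (∀ i, Y i) → ℝ) (hf₁ : f₁ = fun w => f₀ (Φ.symm w))
    -- final marginal density of the system A
    (fA' : X → ℝ) (hfA'm : Measurable fA') (hfA'0 : ∀ x, 0 ≤ fA' x)
    (hfA'marg : ∀ s : Set X, MeasurableSet s →
      (∫ x in s, fA' x ∂μ) =
        ∫ w, s.indicator (fun _ => (1 : ℝ)) w.1 * f₁ w ∂(μ.prod (Measure.pi ν)))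
    -- final marginal densities of the reservoirs
    (g' : ∀ i, Y i → ℝ) (hg'm : ∀ i, Measurable (g' i)) (hg'0 : ∀ i y, 0 ≤ g' i y)
    (hg'marg : ∀ i, ∀ s : Set (Y i), MeasurableSet s →
      (∫ y in s, g' i y ∂(ν i)) =
        ∫ w, s.indicator (fun _ => (1 : ℝ)) (w.2 i) * f₁ w ∂(μ.prod (Measure.pi ν)))
    -- finiteness of the entropy integrals
    (hSfA : Integrable (fun x => fA x * Real.log (fA x)) μ)
    (hSfA' : Integrable (fun x => fA' x * Real.log (fA' x)) μ)
    (hSg : ∀ i, Integrable (fun y => g i y * Real.log (g i y)) (ν i))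
    (hSg' : ∀ i, Integrable (fun y => g' i y * Real.log (g' i y)) (ν i))
    (hSf₁ : Integrable (fun w => f₁ w * Real.log (f₁ w)) (μ.prod (Measure.pi ν)))
    -- finiteness of the energy integrals
    (hEg : ∀ i, Integrable (fun y => H i y * g i y) (ν i))
    (hEg' : ∀ i, Integrable (fun y => H i y * g' i y) (ν i))
    -- expected heat gained by the system from reservoir i
    (Q : Fin m → ℝ)
    (hQ : ∀ i, Q i = (∫ y, H i y * g i y ∂(ν i)) - ∫ y, H i y * g' i y ∂(ν i))
    -- the process is cyclic: the system's marginal distribution is restored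
    (hcyclic : fA' =ᵐ[μ] fA) :
    ∑ i, β i * Q i ≤ 0 := by
  -- basic facts about the canonical densities g i
  have hgm : ∀ i, Measurable (g i) := by
    intro i; rw [hg i]
    exact measurable_const.mul (Real.measurable_exp.comp ((hH i).const_mul (-β i)))
  have hgpos : ∀ i y, 0 < g i y := by
    intro i y; rw [hg i]
    exact mul_pos (inv_pos.2 (hZpos i)) (Real.exp_pos _)
  have hgi : ∀ i, Integrable (g i) (ν i) := by
    intro i; rw [hg i]; exact (hexp i).const_mul _
  have hg1 : ∀ i, (∫ y, g i y ∂(ν i)) = 1 := by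
    intro i; rw [hg i, integral_const_mul, ← hZ i]
    exact inv_mul_cancel₀ (ne_of_gt (hZpos i))
  -- volume instances to use Fubini on the pi space
  letI mS : ∀ i, MeasureSpace (Y i) := fun i => ⟨ν i⟩
  haveI hSF : ∀ i, SigmaFinite (volume : Measure (Y i)) :=
    fun i => inferInstanceAs (SigmaFinite (ν i))
  have hvol : (Measure.pi ν) = (volume : Measure (∀ i, Y i)) := volume_pi.symm
  have hPiI : ∀ (h : ∀ i, Y i → ℝ), (∀ i, Integrable (h i) (ν i)) →
      Integrable (fun y : ∀ i, Y i => ∏ i, h i (y i)) (Measure.pi ν) := by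
    intro h hint
    rw [hvol]
    exact Integrable.fintype_prod_dep (fun i => hint i)
  have hPiEq : ∀ (h : ∀ i, Y i → ℝ), (∀ i, Integrable (h i) (ν i)) →
      (∫ y, ∏ i, h i (y i) ∂(Measure.pi ν)) = ∏ i, ∫ y, h i y ∂(ν i) := by
    intro h hint
    rw [hvol]
    exact MeasureTheory.integral_fintype_prod_eq_prod h
  -- product of canonical densities
  have hprodgm : Measurable (fun y : ∀ i, Y i => ∏ i, g i (y i)) :=
    Finset.measurable_prod _ fun i _ => (hgm i).comp (measurable_pi_apply i)
  have hprodg_pos : ∀ y : ∀ i, Y i, 0 < ∏ i, g i (y i) :=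
    fun y => Finset.prod_pos fun i _ => hgpos i (y i)
  have hprodg_int : Integrable (fun y : ∀ i, Y i => ∏ i, g i (y i)) (Measure.pi ν) := hPiI g hgi
  have hprodg_1 : (∫ y, ∏ i, g i (y i) ∂(Measure.pi ν)) = 1 := by
    rw [hPiEq g hgi]
    simp [hg1]
  -- f₀ facts
  have hf₀m : Measurable f₀ := by
    rw [hf₀]; exact (hfAm.comp measurable_fst).mul (hprodgm.comp measurable_snd)
  have hf₀0 : ∀ w, 0 ≤ f₀ w := by
    intro w; rw [hf₀]; exact mul_nonneg (hfA0 _) (hprodg_pos _).le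
  have hf₀i : Integrable f₀ (μ.prod (Measure.pi ν)) := by
    rw [hf₀]; exact hfAi.mul_prod hprodg_int
  have hf₀1 : (∫ w, f₀ w ∂(μ.prod (Measure.pi ν))) = 1 := by
    rw [hf₀]
    have h := integral_prod_mul (μ := μ) (ν := Measure.pi ν) fA
      (fun y : ∀ i, Y i => ∏ i, g i (y i))
    rw [hfA1, hprodg_1, one_mul] at h
    exact h
  -- f₁ facts
  have hΦs : MeasurePreserving Φ.symm (μ.prod (Measure.pi ν)) (μ.prod (Measure.pi ν)) :=
    hΦ.symm Φ
  have hf₁m : Measurable f₁ := by rw [hf₁]; exact hf₀m.comp Φ.symm.measurable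
  have hf₁0 : ∀ w, 0 ≤ f₁ w := by intro w; rw [hf₁]; exact hf₀0 _
  have hf₁i : Integrable f₁ (μ.prod (Measure.pi ν)) := by
    rw [hf₁]
    exact (hΦs.integrable_comp_emb Φ.symm.measurableEmbedding).2 hf₀i
  have hf₁1 : (∫ w, f₁ w ∂(μ.prod (Measure.pi ν))) = 1 := by
    rw [hf₁]
    rw [hΦs.integral_comp' f₀]
    exact hf₀1
  have hB : (∫ w, f₁ w * Real.log (f₁ w) ∂(μ.prod (Measure.pi ν)))
      = ∫ w, f₀ w * Real.log (f₀ w) ∂(μ.prod (Measure.pi ν)) := by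
    rw [hf₁]
    exact hΦs.integral_comp' (fun w => f₀ w * Real.log (f₀ w))
  -- fA' facts
  have hfA'i : Integrable fA' μ := hfAi.congr hcyclic.symm
  have hfA'1 : (∫ x, fA' x ∂μ) = 1 := by
    rw [integral_congr_ae hcyclic]; exact hfA1
  have hSA'eq : (∫ x, fA' x * Real.log (fA' x) ∂μ) = ∫ x, fA x * Real.log (fA x) ∂μ :=
    integral_congr_ae (hcyclic.mono fun x hx => by simp only [hx])
  -- g' facts
  have hg'i : ∀ i, Integrable (g' i) (ν i) := by
    intro i
    apply integrable_of_bddSetIntegral (hg'm i) (hg'0 i) (C := 1)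
    intro s hs
    rw [hg'marg i s hs]
    calc (∫ w, s.indicator (fun _ => (1:ℝ)) (w.2 i) * f₁ w ∂(μ.prod (Measure.pi ν)))
        ≤ ∫ w, f₁ w ∂(μ.prod (Measure.pi ν)) := by
          apply integral_mono_of_nonneg (ae_of_all _ fun w => ?_) hf₁i (ae_of_all _ fun w => ?_)
          · exact mul_nonneg (Set.indicator_nonneg (fun _ _ => zero_le_one) _) (hf₁0 w)
          · by_cases hw : w.2 i ∈ s
            · rw [Set.indicator_of_mem hw, one_mul]
            · rw [Set.indicator_of_notMem hw, zero_mul]; exact hf₁0 w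
      _ = 1 := hf₁1
  have hg'1 : ∀ i, (∫ y, g' i y ∂(ν i)) = 1 := by
    intro i
    have := hg'marg i Set.univ MeasurableSet.univ
    rw [setIntegral_univ] at this
    rw [this]
    simp only [Set.indicator_univ, one_mul]
    exact hf₁1
  -- pushforward identification of the marginals
  have hmapA := marg_transfer (measurable_fst) hf₁m hf₁0 hf₁i hfA'm hfA'0 hfA'i hfA'marg
  have hmapi := fun i => marg_transfer ((measurable_pi_apply i).comp measurable_snd)
    hf₁m hf₁0 hf₁i (hg'm i) (hg'0 i) (hg'i i) (hg'marg i)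
  -- transfer of integrals through the marginal identification
  have htA := fun (φ : X → ℝ) (hφ : Measurable φ) =>
    transfer_integral measurable_fst hf₁m hf₁0 hfA'm hfA'0 hmapA φ hφ
  have hti := fun (i : Fin m) (φ : Y i → ℝ) (hφ : Measurable φ) =>
    transfer_integral ((measurable_pi_apply i).comp measurable_snd) hf₁m hf₁0
      (hg'm i) (hg'0 i) (hmapi i) φ hφ
  -- a.e. positivity of the final marginals where f₁ is positive
  have haeA : ∀ᵐ w ∂(μ.prod (Measure.pi ν)), fA' w.1 = 0 → f₁ w = 0 := by
    set s : Set X := fA' ⁻¹' {0} with hsdef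
    have hs : MeasurableSet s := hfA'm (measurableSet_singleton 0)
    have h0 : (∫ x in s, fA' x ∂μ) = 0 := by
      rw [setIntegral_congr_fun hs (fun x hx => hx)]
      exact integral_zero _ _
    have h1 := (hfA'marg s hs).symm.trans h0
    have hInt : Integrable (fun w => s.indicator (fun _ => (1:ℝ)) w.1 * f₁ w)
        (μ.prod (Measure.pi ν)) := by
      apply Integrable.mono hf₁i
      · exact (((measurable_const.indicator hs).comp measurable_fst).mul
          hf₁m).aestronglyMeasurable
      · refine ae_of_all _ fun w => ?_
        rw [Real.norm_eq_abs, Real.norm_eq_abs]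
        by_cases hw : w.1 ∈ s
        · rw [Set.indicator_of_mem hw, one_mul]
        · rw [Set.indicator_of_notMem hw, zero_mul, abs_zero]; exact abs_nonneg _
    have h2 := (integral_eq_zero_iff_of_nonneg_ae
      (ae_of_all _ fun w => mul_nonneg
        (Set.indicator_nonneg (fun _ _ => zero_le_one) _) (hf₁0 w)) hInt).1 h1
    refine h2.mono fun w hw hz => ?_
    have hmem : w.1 ∈ s := hz
    simpa [Set.indicator_of_mem hmem] using hw
  have haei : ∀ i, ∀ᵐ w ∂(μ.prod (Measure.pi ν)), g' i (w.2 i) = 0 → f₁ w = 0 := by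
    intro i
    set s : Set (Y i) := g' i ⁻¹' {0} with hsdef
    have hs : MeasurableSet s := hg'm i (measurableSet_singleton 0)
    have h0 : (∫ y in s, g' i y ∂(ν i)) = 0 := by
      rw [setIntegral_congr_fun hs (fun y hy => hy)]
      exact integral_zero _ _
    have h1 := (hg'marg i s hs).symm.trans h0
    have hInt : Integrable (fun w => s.indicator (fun _ => (1:ℝ)) (w.2 i) * f₁ w)
        (μ.prod (Measure.pi ν)) := by
      apply Integrable.mono hf₁i
      · exact (((measurable_const.indicator hs).comp
          ((measurable_pi_apply i).comp measurable_snd)).mul hf₁m).aestronglyMeasurable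
      · refine ae_of_all _ fun w => ?_
        rw [Real.norm_eq_abs, Real.norm_eq_abs]
        by_cases hw : w.2 i ∈ s
        · rw [Set.indicator_of_mem hw, one_mul]
        · rw [Set.indicator_of_notMem hw, zero_mul, abs_zero]; exact abs_nonneg _
    have h2 := (integral_eq_zero_iff_of_nonneg_ae
      (ae_of_all _ fun w => mul_nonneg
        (Set.indicator_nonneg (fun _ _ => zero_le_one) _) (hf₁0 w)) hInt).1 h1
    refine h2.mono fun w hw hz => ?_
    have hmem : w.2 i ∈ s := hz
    simpa [Set.indicator_of_mem hmem] using hw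
  -- the logarithm of the canonical density
  have hlogg : ∀ i y, Real.log (g i y) = -Real.log (Z i) + -β i * H i y := by
    intro i y
    rw [hg i]
    simp only
    rw [Real.log_mul (inv_ne_zero (ne_of_gt (hZpos i))) (Real.exp_ne_zero _),
      Real.log_inv, Real.log_exp]
  -- Claim E: entropy of the canonical density
  have hE : ∀ i, (∫ y, g i y * Real.log (g i y) ∂(ν i))
      = -Real.log (Z i) - β i * ∫ y, H i y * g i y ∂(ν i) := by
    intro i
    have hpt : ∀ y, g i y * Real.log (g i y)
        = -Real.log (Z i) * g i y + -β i * (H i y * g i y) := by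
      intro y; rw [hlogg i y]; ring
    calc (∫ y, g i y * Real.log (g i y) ∂(ν i))
        = ∫ y, (-Real.log (Z i) * g i y + -β i * (H i y * g i y)) ∂(ν i) := by
          simp_rw [hpt]
      _ = -Real.log (Z i) * (∫ y, g i y ∂(ν i))
            + -β i * ∫ y, H i y * g i y ∂(ν i) := by
          rw [integral_add ((hgi i).const_mul _) ((hEg i).const_mul _),
            integral_const_mul, integral_const_mul]
      _ = _ := by rw [hg1 i]; ring
  -- Claim D: relative-entropy inequality against the canonical density
  have hD : ∀ i, -Real.log (Z i) - β i * (∫ y, H i y * g' i y ∂(ν i))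
      ≤ ∫ y, g' i y * Real.log (g' i y) ∂(ν i) := by
    intro i
    have heq : (fun y => g' i y * Real.log (g i y))
        = fun y => -Real.log (Z i) * g' i y + -β i * (H i y * g' i y) := by
      funext y; rw [hlogg i y]; ring
    have hIlog : Integrable (fun y => g' i y * Real.log (g i y)) (ν i) := by
      rw [heq]
      exact ((hg'i i).const_mul _).add ((hEg' i).const_mul _)
    have hmono : (∫ y, (g' i y - g i y) ∂(ν i))
        ≤ ∫ y, (g' i y * Real.log (g' i y) - g' i y * Real.log (g i y)) ∂(ν i) :=
      integral_mono ((hg'i i).sub (hgi i)) ((hSg' i).sub hIlog)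
        (fun y => gibbs_pointwise_s11 (hg'0 i y) (hgpos i y))
    rw [integral_sub (hg'i i) (hgi i), integral_sub (hSg' i) hIlog, hg'1 i, hg1 i] at hmono
    have hgg' : (∫ y, g' i y * Real.log (g i y) ∂(ν i))
        = -Real.log (Z i) - β i * ∫ y, H i y * g' i y ∂(ν i) := by
      calc (∫ y, g' i y * Real.log (g i y) ∂(ν i))
          = ∫ y, (-Real.log (Z i) * g' i y + -β i * (H i y * g' i y)) ∂(ν i) := by
            rw [heq]
        _ = -Real.log (Z i) * (∫ y, g' i y ∂(ν i))
              + -β i * ∫ y, H i y * g' i y ∂(ν i) := by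
            rw [integral_add ((hg'i i).const_mul _) ((hEg' i).const_mul _),
              integral_const_mul, integral_const_mul]
        _ = _ := by rw [hg'1 i]; ring
    rw [hgg'] at hmono
    linarith
  -- Claim C: entropy of the initial product density
  have hC : (∫ w, f₀ w * Real.log (f₀ w) ∂(μ.prod (Measure.pi ν)))
      = (∫ x, fA x * Real.log (fA x) ∂μ)
        + ∑ j, ∫ y, g j y * Real.log (g j y) ∂(ν j) := by
    set h : Fin m → ∀ i, Y i → ℝ :=
      fun j i y => if i = j then g i y * Real.log (g i y) else g i y with hhdef
    have hhi : ∀ j i, Integrable (h j i) (ν i) := by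
      intro j i
      simp only [hhdef]
      split_ifs with hij
      · exact hSg i
      · exact hgi i
    set T : Fin m → (X × (∀ i, Y i)) → ℝ :=
      fun j w => fA w.1 * ∏ i, h j i (w.2 i) with hTdef
    set T0 : (X × (∀ i, Y i)) → ℝ :=
      fun w => (fA w.1 * Real.log (fA w.1)) * ∏ i, g i (w.2 i) with hT0def
    have hpoint : ∀ w, f₀ w * Real.log (f₀ w) = T0 w + ∑ j, T j w := by
      intro w
      by_cases hfa : fA w.1 = 0
      · simp [hf₀, hT0def, hTdef, hfa]
      · have hfa' : 0 < fA w.1 := lt_of_le_of_ne (hfA0 _) (Ne.symm hfa)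
        have hf₀w : f₀ w = fA w.1 * ∏ i, g i (w.2 i) := by rw [hf₀]
        have hlogs : Real.log (f₀ w)
            = Real.log (fA w.1) + ∑ i, Real.log (g i (w.2 i)) := by
          rw [hf₀w, Real.log_mul hfa (ne_of_gt (hprodg_pos w.2)),
            Real.log_prod (fun i _ => ne_of_gt (hgpos i (w.2 i)))]
        have hTj : ∀ j, T j w
            = fA w.1 * ((∏ i, g i (w.2 i)) * Real.log (g j (w.2 j))) := by
          intro j
          have h1 : (∏ i, h j i (w.2 i))
              = (g j (w.2 j) * Real.log (g j (w.2 j)))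
                * ∏ i ∈ Finset.univ.erase j, g i (w.2 i) := by
            rw [← Finset.mul_prod_erase Finset.univ (fun i => h j i (w.2 i))
              (Finset.mem_univ j)]
            simp only [hhdef, if_pos rfl]
            congr 1
            refine Finset.prod_congr rfl fun i hi => ?_
            rw [if_neg (Finset.ne_of_mem_erase hi)]
          have h2 : (∏ i, g i (w.2 i))
              = g j (w.2 j) * ∏ i ∈ Finset.univ.erase j, g i (w.2 i) :=
            (Finset.mul_prod_erase Finset.univ (fun i => g i (w.2 i))
              (Finset.mem_univ j)).symm
          rw [hTdef]
          simp only
          rw [h1, h2]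
          ring
        rw [hlogs, hf₀w, hT0def]
        simp only
        rw [mul_add, Finset.mul_sum]
        congr 1
        · ring
        · refine Finset.sum_congr rfl fun j _ => ?_
          rw [hTj j]
          ring
    have hT0i : Integrable T0 (μ.prod (Measure.pi ν)) := hSfA.mul_prod hprodg_int
    have hTji : ∀ j, Integrable (T j) (μ.prod (Measure.pi ν)) :=
      fun j => hfAi.mul_prod (hPiI (h j) (hhi j))
    have hT0eq : (∫ w, T0 w ∂(μ.prod (Measure.pi ν)))
        = ∫ x, fA x * Real.log (fA x) ∂μ := by
      have hq := integral_prod_mul (μ := μ) (ν := Measure.pi ν)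
        (fun x => fA x * Real.log (fA x)) (fun y : ∀ i, Y i => ∏ i, g i (y i))
      rw [hprodg_1, mul_one] at hq
      exact hq
    have hTjeq : ∀ j, (∫ w, T j w ∂(μ.prod (Measure.pi ν)))
        = ∫ y, g j y * Real.log (g j y) ∂(ν j) := by
      intro j
      have hq := integral_prod_mul (μ := μ) (ν := Measure.pi ν) fA
        (fun y : ∀ i, Y i => ∏ i, h j i (y i))
      rw [hfA1, one_mul, hPiEq (h j) (hhi j)] at hq
      have hfac : (∏ i, ∫ y, h j i y ∂(ν i)) = ∫ y, g j y * Real.log (g j y) ∂(ν j) := by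
        have hval : ∀ i, (∫ y, h j i y ∂(ν i))
            = if i = j then ∫ y, g j y * Real.log (g j y) ∂(ν j) else 1 := by
          intro i
          by_cases hij : i = j
          · subst hij
            simp [hhdef]
          · simp only [hhdef, if_neg hij]
            exact hg1 i
        rw [Finset.prod_congr rfl (fun i _ => hval i), Finset.prod_ite_eq' Finset.univ j
          (fun _ => ∫ y, g j y * Real.log (g j y) ∂(ν j))]
        simp
      rw [hfac] at hq
      exact hq
    calc (∫ w, f₀ w * Real.log (f₀ w) ∂(μ.prod (Measure.pi ν)))
        = ∫ w, (T0 w + ∑ j, T j w) ∂(μ.prod (Measure.pi ν)) := by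
          simp_rw [hpoint]
      _ = (∫ w, T0 w ∂(μ.prod (Measure.pi ν)))
            + ∑ j, ∫ w, T j w ∂(μ.prod (Measure.pi ν)) := by
          rw [integral_add hT0i (integrable_finset_sum _ (fun j _ => hTji j)),
            integral_finset_sum _ (fun j _ => hTji j)]
      _ = _ := by
          rw [hT0eq]
          congr 1
          exact Finset.sum_congr rfl fun j _ => hTjeq j
  -- Claim A: Gibbs inequality against the product of the final marginals
  set hden : (X × (∀ i, Y i)) → ℝ := fun w => fA' w.1 * ∏ i, g' i (w.2 i) with hhden
  have hg'prodpos_of : ∀ w : X × (∀ i, Y i), (∀ i, 0 < g' i (w.2 i)) →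
      0 < ∏ i, g' i (w.2 i) := fun w hp => Finset.prod_pos fun i _ => hp i
  have hg'prod_int : Integrable (fun y : ∀ i, Y i => ∏ i, g' i (y i)) (Measure.pi ν) :=
    hPiI g' hg'i
  have hdeni : Integrable hden (μ.prod (Measure.pi ν)) := hfA'i.mul_prod hg'prod_int
  have hden1 : (∫ w, hden w ∂(μ.prod (Measure.pi ν))) = 1 := by
    have hq := integral_prod_mul (μ := μ) (ν := Measure.pi ν) fA'
      (fun y : ∀ i, Y i => ∏ i, g' i (y i))
    rw [hfA'1, one_mul, hPiEq g' hg'i] at hq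
    simp only [hg'1, Finset.prod_const_one] at hq
    exact hq
  have hφA := htA (fun x => Real.log (fA' x)) (Real.measurable_log.comp hfA'm)
  have hIA' : Integrable (fun x => Real.log (fA' x) * fA' x) μ :=
    hSfA'.congr (ae_of_all _ fun x => mul_comm _ _)
  have hIA : Integrable (fun w => Real.log (fA' w.1) * f₁ w) (μ.prod (Measure.pi ν)) :=
    hφA.2.2 hIA'
  have hφi := fun i => hti i (fun y => Real.log (g' i y))
    (Real.measurable_log.comp (hg'm i))
  have hIi' : ∀ i, Integrable (fun y => Real.log (g' i y) * g' i y) (ν i) :=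
    fun i => (hSg' i).congr (ae_of_all _ fun y => mul_comm _ _)
  have hIi : ∀ i, Integrable (fun w => Real.log (g' i (w.2 i)) * f₁ w)
      (μ.prod (Measure.pi ν)) := fun i => (hφi i).2.2 (hIi' i)
  have hIA2 : Integrable (fun w => f₁ w * Real.log (fA' w.1)) (μ.prod (Measure.pi ν)) :=
    hIA.congr (ae_of_all _ fun w => mul_comm _ _)
  have hIi2 : ∀ i, Integrable (fun w => f₁ w * Real.log (g' i (w.2 i)))
      (μ.prod (Measure.pi ν)) := fun i => (hIi i).congr (ae_of_all _ fun w => mul_comm _ _)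
  have hsumI : Integrable (fun w => ∑ i, f₁ w * Real.log (g' i (w.2 i)))
      (μ.prod (Measure.pi ν)) := integrable_finset_sum _ fun i _ => hIi2 i
  have hIsum2 : Integrable (fun w => f₁ w * Real.log (fA' w.1)
      + ∑ i, f₁ w * Real.log (g' i (w.2 i))) (μ.prod (Measure.pi ν)) := hIA2.add hsumI
  have hkey : ∀ᵐ w ∂(μ.prod (Measure.pi ν)),
      f₁ w - hden w ≤ f₁ w * Real.log (f₁ w)
        - (f₁ w * Real.log (fA' w.1) + ∑ i, f₁ w * Real.log (g' i (w.2 i))) := by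
    filter_upwards [haeA, ae_all_iff.2 haei] with w hA hi
    by_cases hz : f₁ w = 0
    · have hd0 : 0 ≤ hden w :=
        mul_nonneg (hfA'0 _) (Finset.prod_nonneg fun i _ => hg'0 i _)
      simp only [hz, zero_mul, zero_sub, mul_zero, Finset.sum_const_zero, add_zero, sub_zero]
      simpa using hd0
    · have hfA'pos : 0 < fA' w.1 :=
        lt_of_le_of_ne (hfA'0 _) (Ne.symm fun h0 => hz (hA h0))
      have hg'pos : ∀ i, 0 < g' i (w.2 i) :=
        fun i => lt_of_le_of_ne (hg'0 _ _) (Ne.symm fun h0 => hz (hi i h0))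
      have hppos : 0 < ∏ i, g' i (w.2 i) := hg'prodpos_of w hg'pos
      have hdpos : 0 < hden w := mul_pos hfA'pos hppos
      have hgp := gibbs_pointwise_s11 (hf₁0 w) hdpos
      have hlogd : Real.log (hden w)
          = Real.log (fA' w.1) + ∑ i, Real.log (g' i (w.2 i)) := by
        rw [hhden]
        simp only
        rw [Real.log_mul (ne_of_gt hfA'pos) (ne_of_gt hppos),
          Real.log_prod (fun i _ => ne_of_gt (hg'pos i))]
      rw [hlogd, mul_add, Finset.mul_sum] at hgp
      exact hgp
  have hineq : (∫ w, (f₁ w - hden w) ∂(μ.prod (Measure.pi ν)))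
      ≤ ∫ w, (f₁ w * Real.log (f₁ w)
        - (f₁ w * Real.log (fA' w.1) + ∑ i, f₁ w * Real.log (g' i (w.2 i))))
          ∂(μ.prod (Measure.pi ν)) :=
    integral_mono_ae (hf₁i.sub hdeni) (hSf₁.sub hIsum2) hkey
  have hEA : (∫ w, f₁ w * Real.log (fA' w.1) ∂(μ.prod (Measure.pi ν)))
      = ∫ x, fA' x * Real.log (fA' x) ∂μ := by
    calc (∫ w, f₁ w * Real.log (fA' w.1) ∂(μ.prod (Measure.pi ν)))
        = ∫ w, Real.log (fA' w.1) * f₁ w ∂(μ.prod (Measure.pi ν)) :=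
          integral_congr_ae (ae_of_all _ fun w => mul_comm _ _)
      _ = ∫ x, Real.log (fA' x) * fA' x ∂μ := hφA.1
      _ = ∫ x, fA' x * Real.log (fA' x) ∂μ :=
          integral_congr_ae (ae_of_all _ fun x => mul_comm _ _)
  have hEi : ∀ i, (∫ w, f₁ w * Real.log (g' i (w.2 i)) ∂(μ.prod (Measure.pi ν)))
      = ∫ y, g' i y * Real.log (g' i y) ∂(ν i) := by
    intro i
    calc (∫ w, f₁ w * Real.log (g' i (w.2 i)) ∂(μ.prod (Measure.pi ν)))
        = ∫ w, Real.log (g' i (w.2 i)) * f₁ w ∂(μ.prod (Measure.pi ν)) :=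
          integral_congr_ae (ae_of_all _ fun w => mul_comm _ _)
      _ = ∫ y, Real.log (g' i y) * g' i y ∂(ν i) := (hφi i).1
      _ = ∫ y, g' i y * Real.log (g' i y) ∂(ν i) :=
          integral_congr_ae (ae_of_all _ fun y => mul_comm _ _)
  have hL0 : (∫ w, (f₁ w - hden w) ∂(μ.prod (Measure.pi ν))) = 0 := by
    rw [integral_sub hf₁i hdeni, hf₁1, hden1, sub_self]
  have hR : (∫ w, (f₁ w * Real.log (f₁ w)
        - (f₁ w * Real.log (fA' w.1) + ∑ i, f₁ w * Real.log (g' i (w.2 i))))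
        ∂(μ.prod (Measure.pi ν)))
      = (∫ w, f₁ w * Real.log (f₁ w) ∂(μ.prod (Measure.pi ν)))
        - ((∫ x, fA' x * Real.log (fA' x) ∂μ)
          + ∑ i, ∫ y, g' i y * Real.log (g' i y) ∂(ν i)) := by
    rw [integral_sub hSf₁ hIsum2, integral_add hIA2 hsumI,
      integral_finset_sum _ (fun i _ => hIi2 i), hEA]
    congr 2
    exact Finset.sum_congr rfl fun i _ => hEi i
  rw [hL0] at hineq
  rw [hR] at hineq
  -- assemble: the sum of reservoir entropies cannot decrease
  have hsum : (∑ i, ∫ y, g' i y * Real.log (g' i y) ∂(ν i))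
      ≤ ∑ i, ∫ y, g i y * Real.log (g i y) ∂(ν i) := by
    have h1 := hineq
    rw [hB, hC] at h1
    linarith [hSA'eq, h1]
  calc (∑ i, β i * Q i)
      ≤ ∑ i, ((∫ y, g' i y * Real.log (g' i y) ∂(ν i))
          - ∫ y, g i y * Real.log (g i y) ∂(ν i)) := by
        refine Finset.sum_le_sum fun i _ => ?_
        rw [hQ i, mul_sub]
        linarith [hE i, hD i]
    _ = (∑ i, ∫ y, g' i y * Real.log (g' i y) ∂(ν i))
          - ∑ i, ∫ y, g i y * Real.log (g i y) ∂(ν i) := Finset.sum_sub_distrib _ _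
    _ ≤ 0 := by linarith [hsum]
end

section
/- (Landauer bound, measure-theoretic core.) Let (X, μ) be a σ-finite measure space and, for j = 1, …, m, let (Y_j, ν_j) be heat reservoirs with measurable Hamiltonians H_j, inverse temperatures β_j > 0, finite nonzero partition functions, and canonical densities g_j = Z_j⁻¹ e^{-β_j H_j}. Let Φ be a fixed measure-preserving measurable equivalence of the product space X × Y_1 × ⋯ × Y_m. Let f_1, …, f_n be probability densities on X such that for each i, the evolution of the initial joint product density f_i ⊗ g_1 ⊗ ⋯ ⊗ g_m under Φ yields a final joint density whose X-marginal is one and the same density f_b; let Q_{i,j} = ∫ H_j g_j dν_j - ∫ H_j g_j^{(i)'} dν_j be the expected heat gained from reservoir j when the initial system density is f_i (g_j^{(i)'} being the corresponding final Y_j-marginal). Let p_1, …, p_n be positive reals summing to 1 and f̄ = ∑_i p_i f_i. Then, assuming all the relevant entropy, relative-entropy, and energy integrals are finite, ∑_{i=1}^n p_i ∑_{j=1}^m β_j Q_{i,j} ≤ ∑_{i=1}^n p_i (S[f_b] - S[f_i]) - ∑_{i=1}^n p_i S[f_i ‖ f̄]. -/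
open MeasureTheory

/-- Gibbs' inequality for densities wrt an arbitrary measure. -/
lemma landauer_gibbs {Ω : Type*} [MeasurableSpace Ω] (π : Measure Ω) {h q : Ω → ℝ}
    (h0 : ∀ w, 0 ≤ h w) (q0 : ∀ w, 0 ≤ q w)
    (hq0 : ∀ᵐ w ∂π, q w = 0 → h w = 0)
    (hi : Integrable h π) (qi : Integrable q π)
    (hhl : Integrable (fun w => h w * Real.log (h w)) π)
    (hql : Integrable (fun w => h w * Real.log (q w)) π)
    (heq : ∫ w, h w ∂π = ∫ w, q w ∂π) :
    ∫ w, h w * Real.log (q w) ∂π ≤ ∫ w, h w * Real.log (h w) ∂π := by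
  have key : ∀ᵐ w ∂π, h w - q w ≤ h w * Real.log (h w) - h w * Real.log (q w) := by
    filter_upwards [hq0] with w hw
    rcases eq_or_lt_of_le (h0 w) with h0w | hpos
    · rw [← h0w]; simp only [zero_mul, sub_zero, zero_sub]
      linarith [q0 w]
    · rcases eq_or_lt_of_le (q0 w) with q0w | qpos
      · exact absurd (hw q0w.symm) (ne_of_gt hpos)
      · have hlog := Real.log_le_sub_one_of_pos (div_pos qpos hpos)
        rw [Real.log_div (ne_of_gt qpos) (ne_of_gt hpos)] at hlog
        have h2 : h w * (Real.log (q w) - Real.log (h w)) ≤ h w * (q w / h w - 1) :=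
          mul_le_mul_of_nonneg_left hlog hpos.le
        have h3 : h w * (q w / h w - 1) = q w - h w := by field_simp
        rw [h3, mul_sub] at h2; linarith
  have := integral_mono_ae (hi.sub qi) (hhl.sub hql) key
  simp only [Pi.sub_apply] at this
  rw [integral_sub hi qi, integral_sub hhl hql, heq] at this
  linarith

lemma landauer_ind_rw {Ω α : Type*} (T : Ω → α) (h : Ω → ℝ) (s : Set α) :
    (fun w => s.indicator (fun _ => (1:ℝ)) (T w) * h w) = (T ⁻¹' s).indicator h := by
  funext w
  by_cases hw : T w ∈ s
  · simp [Set.indicator_of_mem hw, Set.indicator_of_mem (show w ∈ T ⁻¹' s from hw)]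
  · simp [Set.indicator_of_notMem hw, Set.indicator_of_notMem (show w ∉ T ⁻¹' s from hw)]

/-- Core marginal lemma: the indicator-level marginal identity upgrades to integrability of the
marginal density and an equality of measures. -/
lemma landauer_marg_core {Ω α : Type*} [MeasurableSpace Ω] [MeasurableSpace α]
    (π : Measure Ω) (κ : Measure α) [SigmaFinite κ]
    {h : Ω → ℝ} (hm : Measurable h) (h0 : ∀ w, 0 ≤ h w) (hint : Integrable h π)
    {T : Ω → α} (hT : Measurable T)
    {ρ : α → ℝ} (ρm : Measurable ρ) (ρ0 : ∀ x, 0 ≤ ρ x)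
    (hmarg : ∀ s : Set α, MeasurableSet s →
      (∫ x in s, ρ x ∂κ) = ∫ w, s.indicator (fun _ => (1:ℝ)) (T w) * h w ∂π) :
    Integrable ρ κ ∧
    (π.withDensity (fun w => ENNReal.ofReal (h w))).map T
      = κ.withDensity (fun x => ENNReal.ofReal (ρ x)) := by
  have hmarg' : ∀ s : Set α, MeasurableSet s →
      (∫ x in s, ρ x ∂κ) = ∫ w in T ⁻¹' s, h w ∂π := by
    intro s hs
    rw [hmarg s hs, landauer_ind_rw T h s, integral_indicator (hT hs)]
  -- integrability of ρ
  have ρint : Integrable ρ κ := by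
    set B : ℕ → Set α := fun k => spanningSets κ k ∩ {x | ρ x ≤ k} with hB
    have hBmeas : ∀ k, MeasurableSet (B k) :=
      fun k => (measurableSet_spanningSets κ k).inter (measurableSet_le ρm measurable_const)
    have hBmono : Monotone B := by
      intro a b hab
      refine Set.inter_subset_inter (monotone_spanningSets κ hab) (fun x hx => ?_)
      simp only [Set.mem_setOf_eq] at hx ⊢
      exact le_trans hx (Nat.cast_le.mpr hab)
    have hBon : ∀ k, IntegrableOn ρ (B k) κ := by
      intro k
      haveI : IsFiniteMeasure (κ.restrict (B k)) := by
        constructor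
        rw [Measure.restrict_apply_univ]
        exact lt_of_le_of_lt (measure_mono Set.inter_subset_left)
          (measure_spanningSets_lt_top κ k)
      refine ⟨ρm.aestronglyMeasurable, HasFiniteIntegral.of_bounded (C := (k:ℝ)) ?_⟩
      refine (ae_restrict_iff' (hBmeas k)).mpr (Filter.Eventually.of_forall ?_)
      intro x hx
      rw [Real.norm_eq_abs, abs_of_nonneg (ρ0 x)]
      exact hx.2
    refine ⟨ρm.aestronglyMeasurable, ?_⟩
    have hnorm : ∀ x, (‖ρ x‖₊ : ENNReal) = ENNReal.ofReal (ρ x) :=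
      fun x => Real.enorm_eq_ofReal (ρ0 x)
    rw [hasFiniteIntegral_iff_ofReal (Filter.Eventually.of_forall ρ0)]
    have hsup : (fun x => ENNReal.ofReal (ρ x)) =
        fun x => ⨆ k, (B k).indicator (fun x => ENNReal.ofReal (ρ x)) x := by
      funext x
      refine le_antisymm ?_ (iSup_le fun k => Set.indicator_le_self _ _ x)
      obtain ⟨k₀, hk₀⟩ : ∃ k, x ∈ spanningSets κ k := by
        have := iUnion_spanningSets κ
        have hx : x ∈ ⋃ k, spanningSets κ k := this ▸ Set.mem_univ x
        exact Set.mem_iUnion.mp hx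
      obtain ⟨k₁, hk₁⟩ := exists_nat_ge (ρ x)
      refine le_trans ?_ (le_iSup _ (max k₀ k₁))
      have hxB : x ∈ B (max k₀ k₁) := by
        constructor
        · exact monotone_spanningSets κ (le_max_left _ _) hk₀
        · exact le_trans hk₁ (by exact_mod_cast Nat.cast_le.mpr (le_max_right k₀ k₁))
      rw [Set.indicator_of_mem hxB]
    rw [hsup, lintegral_iSup]
    · refine lt_of_le_of_lt (iSup_le fun k => ?_)
        (ENNReal.ofReal_lt_top (r := ∫ w, h w ∂π))
      rw [lintegral_indicator (hBmeas k) _,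
        ← ofReal_integral_eq_lintegral_ofReal (hBon k)
          (Filter.Eventually.of_forall (fun x => ρ0 x))]
      apply ENNReal.ofReal_le_ofReal
      rw [hmarg' (B k) (hBmeas k)]
      exact setIntegral_le_integral hint (Filter.Eventually.of_forall h0)
    · exact fun k => ((ρm.ennreal_ofReal).indicator (hBmeas k))
    · intro a b hab x
      exact Set.indicator_le_indicator_of_subset (hBmono hab) (fun _ => zero_le) x
  refine ⟨ρint, ?_⟩
  ext s hs
  rw [Measure.map_apply hT hs, withDensity_apply _ (hT hs), withDensity_apply _ hs,
    ← ofReal_integral_eq_lintegral_ofReal hint.integrableOn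
      (Filter.Eventually.of_forall h0),
    ← ofReal_integral_eq_lintegral_ofReal ρint.integrableOn
      (Filter.Eventually.of_forall ρ0), hmarg' s hs]

lemma landauer_marg_transfer {Ω α : Type*} [MeasurableSpace Ω] [MeasurableSpace α]
    (π : Measure Ω) (κ : Measure α)
    {h : Ω → ℝ} (hm : Measurable h) (h0 : ∀ w, 0 ≤ h w)
    {T : Ω → α} (hT : Measurable T)
    {ρ : α → ℝ} (ρm : Measurable ρ) (ρ0 : ∀ x, 0 ≤ ρ x)
    (meq : (π.withDensity (fun w => ENNReal.ofReal (h w))).map T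
      = κ.withDensity (fun x => ENNReal.ofReal (ρ x)))
    (φ : α → ℝ) (φm : Measurable φ) :
    (∫ w, φ (T w) * h w ∂π = ∫ x, φ x * ρ x ∂κ) ∧
    (Integrable (fun x => φ x * ρ x) κ → Integrable (fun w => φ (T w) * h w) π) := by
  have hd : (fun w => ENNReal.ofReal (h w)) = (fun w => ((h w).toNNReal : ENNReal)) := rfl
  have ρd : (fun x => ENNReal.ofReal (ρ x)) = (fun x => ((ρ x).toNNReal : ENNReal)) := rfl
  have hmn : Measurable (fun w => (h w).toNNReal) := hm.real_toNNReal
  have ρmn : Measurable (fun x => (ρ x).toNNReal) := ρm.real_toNNReal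
  constructor
  · have e1 : ∫ x, φ x ∂(κ.withDensity (fun x => ENNReal.ofReal (ρ x))) = ∫ x, φ x * ρ x ∂κ := by
      rw [ρd, integral_withDensity_eq_integral_smul ρmn]
      congr 1; funext x
      rw [NNReal.smul_def, Real.coe_toNNReal _ (ρ0 x), smul_eq_mul, mul_comm]
    have e2 : ∫ x, φ x ∂((π.withDensity (fun w => ENNReal.ofReal (h w))).map T)
        = ∫ w, φ (T w) * h w ∂π := by
      rw [integral_map hT.aemeasurable φm.aestronglyMeasurable, hd,
        integral_withDensity_eq_integral_smul hmn]
      congr 1; funext w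
      rw [NNReal.smul_def, Real.coe_toNNReal _ (h0 w), smul_eq_mul, mul_comm]
    rw [← e1, ← meq, e2]
  · intro hi
    have i1 : Integrable φ (κ.withDensity (fun x => ENNReal.ofReal (ρ x))) := by
      rw [ρd, integrable_withDensity_iff_integrable_smul ρmn]
      apply hi.congr
      filter_upwards with x
      rw [NNReal.smul_def, Real.coe_toNNReal _ (ρ0 x), smul_eq_mul, mul_comm]
    rw [← meq] at i1
    rw [integrable_map_measure φm.aestronglyMeasurable hT.aemeasurable] at i1
    rw [hd, integrable_withDensity_iff_integrable_smul hmn] at i1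
    apply i1.congr
    filter_upwards with w
    simp only [Function.comp]
    rw [NNReal.smul_def, Real.coe_toNNReal _ (h0 w), smul_eq_mul, mul_comm]

lemma landauer_pi_integral {m : ℕ} {Y : Fin m → Type*} [∀ j, MeasurableSpace (Y j)]
    (ν : ∀ j, Measure (Y j)) [∀ j, SigmaFinite (ν j)] (F : ∀ j, Y j → ℝ) :
    ∫ y, ∏ j, F j (y j) ∂Measure.pi ν = ∏ j, ∫ y, F j y ∂ν j := by
  letI : ∀ j, MeasureSpace (Y j) := fun j => ⟨ν j⟩
  haveI : ∀ j, SigmaFinite (volume : Measure (Y j)) := fun j => inferInstanceAs (SigmaFinite (ν j))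
  exact MeasureTheory.integral_fintype_prod_eq_prod (ι := Fin m) F

lemma landauer_pi_integrable {m : ℕ} {Y : Fin m → Type*} [∀ j, MeasurableSpace (Y j)]
    (ν : ∀ j, Measure (Y j)) [∀ j, SigmaFinite (ν j)] (F : ∀ j, Y j → ℝ)
    (hF : ∀ j, Integrable (F j) (ν j)) :
    Integrable (fun y => ∏ j, F j (y j)) (Measure.pi ν) := by
  letI : ∀ j, MeasureSpace (Y j) := fun j => ⟨ν j⟩
  haveI : ∀ j, SigmaFinite (volume : Measure (Y j)) := fun j => inferInstanceAs (SigmaFinite (ν j))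
  exact MeasureTheory.Integrable.fintype_prod_dep hF

/-- Landauer bound, measure-theoretic core: a fixed measure-preserving evolution `Φ` of
system plus canonical reservoirs takes each input system density `f i` to a final joint
density with one and the same system marginal `f_b`. With `Q i j` the expected heat
gained from reservoir `j` on input `i`, positive weights `p` summing to `1`, and
`f̄ = ∑ p i • f i`, one has
`∑ i, p i * ∑ j, β j * Q i j ≤ ∑ i, p i * (S[f_b] - S[f i]) - ∑ i, p i * S[f i ‖ f̄]`,
where `S[f] = -∫ f log f` and `S[f ‖ g] = ∫ f log (f/g)`. -/
theorem landauer_bound_measure_theoretic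
    {X : Type*} [MeasurableSpace X] (μ : Measure X) [SigmaFinite μ]
    (m : ℕ) {Y : Fin m → Type*} [∀ j, MeasurableSpace (Y j)]
    (ν : ∀ j, Measure (Y j)) [∀ j, SigmaFinite (ν j)]
    (H : ∀ j, Y j → ℝ) (hH : ∀ j, Measurable (H j))
    (β : Fin m → ℝ) (hβ : ∀ j, 0 < β j)
    (hexp : ∀ j, Integrable (fun y => Real.exp (-β j * H j y)) (ν j))
    (Z : Fin m → ℝ) (hZ : ∀ j, Z j = ∫ y, Real.exp (-β j * H j y) ∂(ν j))
    (hZpos : ∀ j, 0 < Z j)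
    (g : ∀ j, Y j → ℝ) (hg : ∀ j, g j = fun y => (Z j)⁻¹ * Real.exp (-β j * H j y))
    -- a single, fixed Hamiltonian evolution of the composite
    (Φ : (X × (∀ j, Y j)) ≃ᵐ (X × (∀ j, Y j)))
    (hΦ : MeasurePreserving Φ (μ.prod (Measure.pi ν)) (μ.prod (Measure.pi ν)))
    -- the input densities of the system
    (n : ℕ) (f : Fin n → X → ℝ)
    (hfm : ∀ i, Measurable (f i)) (hf0 : ∀ i x, 0 ≤ f i x)
    (hfi : ∀ i, Integrable (f i) μ) (hf1 : ∀ i, (∫ x, f i x ∂μ) = 1)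
    -- the evolved joint densities (reservoirs initially canonical and uncorrelated)
    (f₁ : Fin n → X × (∀ j, Y j) → ℝ)
    (hf₁ : ∀ i, f₁ i = fun w => f i (Φ.symm w).1 * ∏ j, g j ((Φ.symm w).2 j))
    -- each input is taken to one and the same final system marginal `fb`
    (fb : X → ℝ) (hfbm : Measurable fb) (hfb0 : ∀ x, 0 ≤ fb x)
    (hfbmarg : ∀ i, ∀ s : Set X, MeasurableSet s →
      (∫ x in s, fb x ∂μ) =
        ∫ w, s.indicator (fun _ => (1 : ℝ)) w.1 * f₁ i w ∂(μ.prod (Measure.pi ν)))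
    -- final reservoir marginals, for each input `i` and each reservoir `j`
    (g' : Fin n → ∀ j, Y j → ℝ)
    (hg'm : ∀ i j, Measurable (g' i j)) (hg'0 : ∀ i j y, 0 ≤ g' i j y)
    (hg'marg : ∀ i j, ∀ s : Set (Y j), MeasurableSet s →
      (∫ y in s, g' i j y ∂(ν j)) =
        ∫ w, s.indicator (fun _ => (1 : ℝ)) (w.2 j) * f₁ i w ∂(μ.prod (Measure.pi ν)))
    -- the weights and the mixture
    (p : Fin n → ℝ) (hp : ∀ i, 0 < p i) (hps : ∑ i, p i = 1)
    (fbar : X → ℝ) (hfbar : fbar = fun x => ∑ i, p i * f i x)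
    -- finiteness of the entropy integrals
    (hSf : ∀ i, Integrable (fun x => f i x * Real.log (f i x)) μ)
    (hSfb : Integrable (fun x => fb x * Real.log (fb x)) μ)
    (hSbar : Integrable (fun x => fbar x * Real.log (fbar x)) μ)
    (hSg : ∀ j, Integrable (fun y => g j y * Real.log (g j y)) (ν j))
    (hSg' : ∀ i j, Integrable (fun y => g' i j y * Real.log (g' i j y)) (ν j))
    (hSf₁ : ∀ i, Integrable (fun w => f₁ i w * Real.log (f₁ i w)) (μ.prod (Measure.pi ν)))
    (hSmix : Integrable
      (fun w => (∑ i, p i * f₁ i w) * Real.log (∑ i, p i * f₁ i w))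
      (μ.prod (Measure.pi ν)))
    (hSg'mix : ∀ j, Integrable
      (fun y => (∑ i, p i * g' i j y) * Real.log (∑ i, p i * g' i j y)) (ν j))
    -- finiteness of the relative-entropy integrals
    (hrel : ∀ i, Integrable (fun x => f i x * Real.log (f i x / fbar x)) μ)
    (hcross : ∀ i, Integrable (fun x => f i x * Real.log (fbar x)) μ)
    -- finiteness of the energy integrals
    (hEg : ∀ j, Integrable (fun y => H j y * g j y) (ν j))
    (hEg' : ∀ i j, Integrable (fun y => H j y * g' i j y) (ν j))
    -- expected heat gained from reservoir `j` when the input density is `f i`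
    (Q : Fin n → Fin m → ℝ)
    (hQ : ∀ i j, Q i j = (∫ y, H j y * g j y ∂(ν j)) - ∫ y, H j y * g' i j y ∂(ν j)) :
    ∑ i, p i * ∑ j, β j * Q i j ≤
      (∑ i, p i * ((-∫ x, fb x * Real.log (fb x) ∂μ) -
        (-∫ x, f i x * Real.log (f i x) ∂μ))) -
      ∑ i, p i * ∫ x, f i x * Real.log (f i x / fbar x) ∂μ := by
  classical
  -- basic facts about the canonical densities
  have gm : ∀ j, Measurable (g j) := by
    intro j; rw [hg j]
    exact measurable_const.mul (((hH j).const_mul (-β j)).exp)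
  have gpos : ∀ j y, 0 < g j y := by
    intro j y; rw [hg j]
    exact mul_pos (inv_pos.mpr (hZpos j)) (Real.exp_pos _)
  have gint : ∀ j, Integrable (g j) (ν j) := by
    intro j; rw [hg j]; exact (hexp j).const_mul _
  have gone : ∀ j, ∫ y, g j y ∂ν j = 1 := by
    intro j
    rw [hg j]
    simp only []
    rw [integral_const_mul, ← hZ j, inv_mul_cancel₀ (ne_of_gt (hZpos j))]
  have glog : ∀ j y, Real.log (g j y) = -Real.log (Z j) - β j * H j y := by
    intro j y; rw [hg j]
    simp only []
    rw [Real.log_mul (inv_ne_zero (ne_of_gt (hZpos j))) (Real.exp_ne_zero _), Real.log_inv, Real.log_exp]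
    ring
  have Sg : ∀ j, ∫ y, g j y * Real.log (g j y) ∂ν j
      = -Real.log (Z j) - β j * ∫ y, H j y * g j y ∂ν j := by
    intro j
    have e : (fun y => g j y * Real.log (g j y))
        = fun y => (-Real.log (Z j)) * g j y - β j * (H j y * g j y) := by
      funext y; rw [glog j y]; ring
    rw [e, integral_sub ((gint j).const_mul _) ((hEg j).const_mul _),
      integral_const_mul, integral_const_mul, gone j, mul_one]
  -- the product canonical density G
  set G : (∀ j, Y j) → ℝ := fun y => ∏ j, g j (y j) with hG
  have Gm : Measurable G :=
    Finset.measurable_prod _ fun j _ => (gm j).comp (measurable_pi_apply j)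
  have Gpos : ∀ y, 0 < G y := fun y => Finset.prod_pos fun j _ => gpos j _
  have Gint : Integrable G (Measure.pi ν) := landauer_pi_integrable ν _ gint
  have Gone : ∫ y, G y ∂Measure.pi ν = 1 := by
    rw [hG, landauer_pi_integral]
    simp only [gone]
    exact Finset.prod_const_one
  set π := μ.prod (Measure.pi ν) with hπ
  have hΦs : MeasurePreserving (Φ.symm : (X × (∀ j, Y j)) ≃ᵐ (X × (∀ j, Y j))) π π :=
    hΦ.symm Φ
  -- facts about the evolved joint densities
  have f₁m : ∀ i, Measurable (f₁ i) := by
    intro i; rw [hf₁ i]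
    exact ((hfm i).comp (measurable_fst.comp Φ.symm.measurable)).mul
      (Finset.measurable_prod _ fun j _ =>
        (gm j).comp ((measurable_pi_apply j).comp (measurable_snd.comp Φ.symm.measurable)))
  have f₁0 : ∀ i w, 0 ≤ f₁ i w := by
    intro i w; rw [hf₁ i]
    exact mul_nonneg (hf0 i _) (Finset.prod_nonneg fun j _ => (gpos j _).le)
  have kdef : ∀ i, f₁ i = (fun z : X × (∀ j, Y j) => f i z.1 * G z.2) ∘ Φ.symm := by
    intro i; rw [hf₁ i]; rfl
  have kint : ∀ i, Integrable (fun z : X × (∀ j, Y j) => f i z.1 * G z.2) π :=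
    fun i => (hfi i).mul_prod Gint
  have f₁int : ∀ i, Integrable (f₁ i) π := by
    intro i; rw [kdef i]
    exact (hΦs.integrable_comp_emb Φ.symm.measurableEmbedding).mpr (kint i)
  have ipfG : ∀ i, ∫ z : X × (∀ j, Y j), f i z.1 * G z.2 ∂π
      = (∫ x, f i x ∂μ) * ∫ y, G y ∂Measure.pi ν := fun i => integral_prod_mul _ _
  have f₁one : ∀ i, ∫ w, f₁ i w ∂π = 1 := by
    intro i; rw [kdef i]
    have hc : ∫ w, ((fun z : X × (∀ j, Y j) => f i z.1 * G z.2) ∘ Φ.symm) w ∂π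
        = ∫ z : X × (∀ j, Y j), f i z.1 * G z.2 ∂π :=
      hΦs.integral_comp' (fun z : X × (∀ j, Y j) => f i z.1 * G z.2)
    rw [hc, ipfG i, hf1 i, Gone, one_mul]
  -- the mixed joint density
  set hbar : X × (∀ j, Y j) → ℝ := fun w => ∑ i, p i * f₁ i w with hhbar
  have hbarm : Measurable hbar :=
    Finset.measurable_sum _ fun i _ => ((f₁m i).const_mul (p i))
  have hbar0 : ∀ w, 0 ≤ hbar w :=
    fun w => Finset.sum_nonneg fun i _ => mul_nonneg (hp i).le (f₁0 i w)
  have hbarint : Integrable hbar π :=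
    integrable_finset_sum _ fun i _ => (f₁int i).const_mul (p i)
  have hbarone : ∫ w, hbar w ∂π = 1 := by
    have : ∫ w, hbar w ∂π = ∑ i, p i * ∫ w, f₁ i w ∂π := by
      rw [hhbar, integral_finset_sum _ (fun i _ => (f₁int i).const_mul (p i))]
      exact Finset.sum_congr rfl fun i _ => integral_const_mul _ _
    rw [this]
    simp only [f₁one, mul_one]
    exact hps
  have hSmix' : Integrable (fun w => hbar w * Real.log (hbar w)) π := hSmix
  -- the mixed system marginal
  have fbar0 : ∀ x, 0 ≤ fbar x := by
    intro x; rw [hfbar]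
    exact Finset.sum_nonneg fun i _ => mul_nonneg (hp i).le (hf0 i x)
  have fbarint : Integrable fbar μ := by
    rw [hfbar]; exact integrable_finset_sum _ fun i _ => (hfi i).const_mul (p i)
  have fbarone : ∫ x, fbar x ∂μ = 1 := by
    have : ∫ x, fbar x ∂μ = ∑ i, p i * ∫ x, f i x ∂μ := by
      rw [hfbar, integral_finset_sum _ (fun i _ => (hfi i).const_mul (p i))]
      exact Finset.sum_congr rfl fun i _ => integral_const_mul _ _
    rw [this]
    simp only [hf1, mul_one]
    exact hps
  -- indicator-integrand integrability
  have indintX : ∀ i (s : Set X), MeasurableSet s →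
      Integrable (fun w : X × (∀ j, Y j) => s.indicator (fun _ => (1:ℝ)) w.1 * f₁ i w) π := by
    intro i s hs
    rw [landauer_ind_rw Prod.fst (f₁ i) s]
    exact (f₁int i).indicator (measurable_fst hs)
  -- weighted marginal identity for the system marginal
  have margX : ∀ s : Set X, MeasurableSet s →
      (∫ x in s, fb x ∂μ) = ∫ w, s.indicator (fun _ => (1:ℝ)) (Prod.fst w) * hbar w ∂π := by
    intro s hs
    calc ∫ x in s, fb x ∂μ = ∑ i, p i * ∫ x in s, fb x ∂μ := by
          rw [← Finset.sum_mul, hps, one_mul]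
      _ = ∑ i, p i * ∫ w, s.indicator (fun _ => (1:ℝ)) w.1 * f₁ i w ∂π :=
          Finset.sum_congr rfl fun i _ => by rw [hfbmarg i s hs]
      _ = ∑ i, ∫ w, p i * (s.indicator (fun _ => (1:ℝ)) w.1 * f₁ i w) ∂π :=
          Finset.sum_congr rfl fun i _ => (integral_const_mul _ _).symm
      _ = ∫ w, s.indicator (fun _ => (1:ℝ)) (Prod.fst w) * hbar w ∂π := by
          rw [← integral_finset_sum _ (fun i _ => ((indintX i s hs).const_mul (p i)))]
          congr 1; funext w
          rw [hhbar, Finset.mul_sum]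
          exact Finset.sum_congr rfl fun i _ => by ring
  obtain ⟨fbint, MX⟩ := landauer_marg_core π μ hbarm hbar0 hbarint measurable_fst hfbm hfb0 margX
  have fbone : ∫ x, fb x ∂μ = 1 := by
    have h1 := margX Set.univ MeasurableSet.univ
    rw [Measure.restrict_univ] at h1
    simp only [Set.indicator_univ, one_mul] at h1
    rw [h1]; exact hbarone
  have g'one : ∀ i j, ∫ y, g' i j y ∂ν j = 1 := by
    intro i j
    have h1 := hg'marg i j Set.univ MeasurableSet.univ
    rw [Measure.restrict_univ] at h1
    simp only [Set.indicator_univ, one_mul] at h1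
    rw [h1]; exact f₁one i
  -- per-pair marginal upgrade for the reservoirs
  have MY : ∀ i j, Integrable (g' i j) (ν j) ∧
      (π.withDensity (fun w => ENNReal.ofReal (f₁ i w))).map
          ((fun y : ∀ j, Y j => y j) ∘ Prod.snd)
        = (ν j).withDensity (fun y => ENNReal.ofReal (g' i j y)) :=
    fun i j => landauer_marg_core π (ν j) (f₁m i) (f₁0 i) (f₁int i)
      ((measurable_pi_apply j).comp measurable_snd) (hg'm i j) (hg'0 i j) (hg'marg i j)
  -- the comparison density q
  set q : X × (∀ j, Y j) → ℝ := fun w => fb w.1 * G w.2 with hq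
  have q0 : ∀ w, 0 ≤ q w := fun w => mul_nonneg (hfb0 _) (Gpos _).le
  have qint : Integrable q π := fbint.mul_prod Gint
  have ipq : ∫ z : X × (∀ j, Y j), fb z.1 * G z.2 ∂π
      = (∫ x, fb x ∂μ) * ∫ y, G y ∂Measure.pi ν := integral_prod_mul _ _
  have qone : ∫ w, q w ∂π = 1 := by
    rw [hq, ipq, fbone, Gone, one_mul]
  -- a.e. vanishing of hbar where q vanishes
  have hq0 : ∀ᵐ w ∂π, q w = 0 → hbar w = 0 := by
    have hs0 : MeasurableSet {x : X | fb x = 0} := hfbm (measurableSet_singleton 0)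
    have h1 : (∫ x in {x : X | fb x = 0}, fb x ∂μ) = 0 := by
      rw [setIntegral_congr_fun hs0 (fun x hx => hx)]
      simp
    have h2 : ∫ w, ({x : X | fb x = 0}).indicator (fun _ => (1:ℝ)) (Prod.fst w) * hbar w ∂π = 0 :=
      (margX _ hs0).symm.trans h1
    rw [landauer_ind_rw Prod.fst hbar {x : X | fb x = 0}] at h2
    have h3 := (integral_eq_zero_iff_of_nonneg_ae
      (Filter.Eventually.of_forall fun w =>
        Set.indicator_nonneg (fun w _ => hbar0 w) w)
      (hbarint.indicator (measurable_fst hs0))).mp h2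
    filter_upwards [h3] with w hw hqw
    have hqw' : fb w.1 * G w.2 = 0 := hqw
    have hfbw : fb w.1 = 0 := by
      rcases mul_eq_zero.mp hqw' with h | h
      · exact h
      · exact absurd h (ne_of_gt (Gpos w.2))
    have hmem : w ∈ Prod.fst ⁻¹' {x : X | fb x = 0} := hfbw
    rw [Set.indicator_of_mem hmem] at hw
    simpa using hw
  -- transfer for the system marginal
  have TX := landauer_marg_transfer π μ hbarm hbar0 measurable_fst hfbm hfb0 MX
      (fun x => Real.log (fb x)) (Real.measurable_log.comp hfbm)
  have TXint : Integrable (fun w : X × (∀ j, Y j) => Real.log (fb w.1) * hbar w) π := by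
    refine TX.2 (hSfb.congr (Filter.Eventually.of_forall fun x => ?_))
    ring
  have TXval : ∫ w, Real.log (fb w.1) * hbar w ∂π = ∫ x, Real.log (fb x) * fb x ∂μ := TX.1
  -- transfers for the reservoir marginals
  have TY := fun i j => landauer_marg_transfer π (ν j) (f₁m i) (f₁0 i)
      ((measurable_pi_apply j).comp measurable_snd) (hg'm i j) (hg'0 i j) (MY i j).2
      (fun y => Real.log (g j y)) (Real.measurable_log.comp (gm j))
  have glogsplit : ∀ i j, (fun y => Real.log (g j y) * g' i j y)
      = fun y => (-Real.log (Z j)) * g' i j y - β j * (H j y * g' i j y) := by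
    intro i j; funext y; rw [glog j y]; ring
  have logg_g'int : ∀ i j, Integrable (fun y => Real.log (g j y) * g' i j y) (ν j) := by
    intro i j
    rw [glogsplit i j]
    exact ((MY i j).1.const_mul _).sub ((hEg' i j).const_mul _)
  have TYint : ∀ i j,
      Integrable (fun w : X × (∀ j, Y j) => Real.log (g j (w.2 j)) * f₁ i w) π :=
    fun i j => (TY i j).2 (logg_g'int i j)
  have TYval : ∀ i j, ∫ w, Real.log (g j (w.2 j)) * f₁ i w ∂π
      = -Real.log (Z j) - β j * ∫ y, H j y * g' i j y ∂ν j := by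
    intro i j
    have v1 : ∫ w, Real.log (g j (w.2 j)) * f₁ i w ∂π
        = ∫ y, Real.log (g j y) * g' i j y ∂ν j := (TY i j).1
    rw [v1, glogsplit i j,
      integral_sub ((MY i j).1.const_mul _) ((hEg' i j).const_mul _),
      integral_const_mul, integral_const_mul, g'one i j, mul_one]
  -- the reservoir contribution to ∫ hbar log q
  have hbarYsplit : ∀ j, (fun w : X × (∀ j, Y j) => Real.log (g j (w.2 j)) * hbar w)
      = fun w => ∑ i, p i * (Real.log (g j (w.2 j)) * f₁ i w) := by
    intro j; funext w
    rw [hhbar, Finset.mul_sum]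
    exact Finset.sum_congr rfl fun i _ => by ring
  have hbarYint : ∀ j,
      Integrable (fun w : X × (∀ j, Y j) => Real.log (g j (w.2 j)) * hbar w) π := by
    intro j
    rw [hbarYsplit j]
    exact integrable_finset_sum _ fun i _ => (TYint i j).const_mul _
  have hbarYval : ∀ j, ∫ w, Real.log (g j (w.2 j)) * hbar w ∂π
      = -Real.log (Z j) - β j * ∑ i, p i * ∫ y, H j y * g' i j y ∂ν j := by
    intro j
    rw [hbarYsplit j, integral_finset_sum _ (fun i _ => (TYint i j).const_mul _)]
    have e1 : ∀ i : Fin n, ∫ w, p i * (Real.log (g j (w.2 j)) * f₁ i w) ∂π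
        = p i * (-Real.log (Z j) - β j * ∫ y, H j y * g' i j y ∂ν j) := by
      intro i; rw [integral_const_mul, TYval i j]
    rw [Finset.sum_congr rfl fun i _ => e1 i]
    have e2 : ∀ i ∈ Finset.univ, p i * (-Real.log (Z j) - β j * ∫ y, H j y * g' i j y ∂ν j)
        = p i * (-Real.log (Z j)) - β j * (p i * ∫ y, H j y * g' i j y ∂ν j) :=
      fun i _ => by ring
    rw [Finset.sum_congr rfl e2, Finset.sum_sub_distrib, ← Finset.sum_mul, hps,
      ← Finset.mul_sum]
    ring
  -- splitting log q almost everywhere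
  have qsplit : ∀ᵐ w ∂π, hbar w * Real.log (q w)
      = Real.log (fb w.1) * hbar w + ∑ j, Real.log (g j (w.2 j)) * hbar w := by
    filter_upwards [hq0] with w hw
    by_cases hfbw : fb w.1 = 0
    · have hqz : q w = 0 := by
        show fb w.1 * G w.2 = 0
        rw [hfbw, zero_mul]
      rw [hw hqz]
      simp
    · have hlq : Real.log (q w) = Real.log (fb w.1) + ∑ j, Real.log (g j (w.2 j)) := by
        have e0 : q w = fb w.1 * G w.2 := rfl
        rw [e0, Real.log_mul hfbw (ne_of_gt (Gpos w.2))]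
        congr 1
        have e1 : G w.2 = ∏ j, g j (w.2 j) := rfl
        rw [e1, Real.log_prod (fun j _ => ne_of_gt (gpos j _))]
      rw [hlq, mul_add, Finset.mul_sum]
      rw [mul_comm (hbar w) (Real.log (fb w.1))]
      congr 1
      exact Finset.sum_congr rfl fun j _ => by ring
  have hbarlogq_int : Integrable (fun w => hbar w * Real.log (q w)) π := by
    refine (TXint.add (integrable_finset_sum (Finset.univ : Finset (Fin m))
      (f := fun j (w : X × (∀ j, Y j)) => Real.log (g j (w.2 j)) * hbar w)
      fun j _ => hbarYint j)).congr ?_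
    filter_upwards [qsplit] with w hw
    exact hw.symm
  have hbarlogq_val : ∫ w, hbar w * Real.log (q w) ∂π
      = (∫ x, Real.log (fb x) * fb x ∂μ)
        + ∑ j, (-Real.log (Z j) - β j * ∑ i, p i * ∫ y, H j y * g' i j y ∂ν j) := by
    rw [integral_congr_ae qsplit,
      integral_add TXint (integrable_finset_sum _ fun j _ => hbarYint j),
      integral_finset_sum _ (fun j _ => hbarYint j), TXval]
    congr 1
    exact Finset.sum_congr rfl fun j _ => hbarYval j
  -- Gibbs' inequality
  have gibbs := landauer_gibbs π hbar0 q0 hq0 hbarint qint hSmix' hbarlogq_int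
    (by rw [hbarone, qone])
  -- entropy of the product G log G
  have Gptwise : ∀ y : ∀ j, Y j, G y * Real.log (G y)
      = ∑ j, ∏ k, Function.update g j (fun t => g j t * Real.log (g j t)) k (y k) := by
    intro y
    have e0 : G y = ∏ j, g j (y j) := rfl
    rw [e0, Real.log_prod (fun j _ => ne_of_gt (gpos j _)), Finset.mul_sum]
    refine Finset.sum_congr rfl fun j _ => ?_
    rw [← Finset.mul_prod_erase Finset.univ
        (fun k => Function.update g j (fun t => g j t * Real.log (g j t)) k (y k))
        (Finset.mem_univ j),
      ← Finset.mul_prod_erase Finset.univ (fun k => g k (y k)) (Finset.mem_univ j)]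
    rw [Function.update_self]
    rw [Finset.prod_congr rfl
      (fun k hk => by rw [Function.update_of_ne (Finset.ne_of_mem_erase hk)] :
        ∀ k ∈ Finset.univ.erase j,
          Function.update g j (fun t => g j t * Real.log (g j t)) k (y k) = g k (y k))]
    ring
  have GlogGint : Integrable (fun y => G y * Real.log (G y)) (Measure.pi ν) := by
    rw [funext Gptwise]
    refine integrable_finset_sum _ fun j _ => ?_
    refine landauer_pi_integrable ν _ fun k => ?_
    by_cases hkj : k = j
    · subst hkj
      simp only [Function.update_self]
      exact hSg k
    · simp only [Function.update_of_ne hkj]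
      exact gint k
  have GlogGval : ∫ y, G y * Real.log (G y) ∂Measure.pi ν
      = ∑ j, ∫ y, g j y * Real.log (g j y) ∂ν j := by
    rw [funext Gptwise, integral_finset_sum _ (fun j _ => landauer_pi_integrable ν _ fun k => by
      by_cases hkj : k = j
      · subst hkj; simp only [Function.update_self]; exact hSg k
      · simp only [Function.update_of_ne hkj]; exact gint k)]
    refine Finset.sum_congr rfl fun j _ => ?_
    rw [landauer_pi_integral]
    rw [Finset.prod_eq_single j
      (fun k _ hkj => by simp only [Function.update_of_ne hkj]; exact gone k)
      (fun h => absurd (Finset.mem_univ j) h)]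
    simp only [Function.update_self]
  -- entropy invariance under the evolution
  have hbark : hbar = (fun z : X × (∀ j, Y j) => fbar z.1 * G z.2) ∘ Φ.symm := by
    funext w
    show (∑ i, p i * f₁ i w) = fbar (Φ.symm w).1 * G ((Φ.symm w).2)
    rw [hfbar]
    simp only []
    rw [Finset.sum_mul]
    refine Finset.sum_congr rfl fun i _ => ?_
    rw [hf₁ i]
    show p i * (f i (Φ.symm w).1 * ∏ j, g j ((Φ.symm w).2 j))
      = p i * f i (Φ.symm w).1 * G ((Φ.symm w).2)
    have e1 : G ((Φ.symm w).2) = ∏ j, g j ((Φ.symm w).2 j) := rfl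
    rw [e1]; ring
  have kbarint1 : Integrable
      (fun z : X × (∀ j, Y j) => fbar z.1 * Real.log (fbar z.1) * G z.2) π :=
    hSbar.mul_prod Gint
  have kbarint2 : Integrable
      (fun z : X × (∀ j, Y j) => fbar z.1 * (G z.2 * Real.log (G z.2))) π :=
    fbarint.mul_prod GlogGint
  have ip1 : ∫ z : X × (∀ j, Y j), fbar z.1 * Real.log (fbar z.1) * G z.2 ∂π
      = (∫ x, fbar x * Real.log (fbar x) ∂μ) * ∫ y, G y ∂Measure.pi ν :=
    integral_prod_mul (fun x => fbar x * Real.log (fbar x)) G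
  have ip2 : ∫ z : X × (∀ j, Y j), fbar z.1 * (G z.2 * Real.log (G z.2)) ∂π
      = (∫ x, fbar x ∂μ) * ∫ y, G y * Real.log (G y) ∂Measure.pi ν :=
    integral_prod_mul fbar (fun y => G y * Real.log (G y))
  have Einv : ∫ w, hbar w * Real.log (hbar w) ∂π
      = (∫ x, fbar x * Real.log (fbar x) ∂μ)
        + ∑ j, (-Real.log (Z j) - β j * ∫ y, H j y * g j y ∂ν j) := by
    have comp : ∫ w, hbar w * Real.log (hbar w) ∂π
        = ∫ z : X × (∀ j, Y j), (fbar z.1 * G z.2) * Real.log (fbar z.1 * G z.2) ∂π := by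
      have hc : ∫ w, ((fun z : X × (∀ j, Y j) =>
            (fbar z.1 * G z.2) * Real.log (fbar z.1 * G z.2)) ∘ Φ.symm) w ∂π
          = ∫ z : X × (∀ j, Y j), (fbar z.1 * G z.2) * Real.log (fbar z.1 * G z.2) ∂π :=
        hΦs.integral_comp' (fun z : X × (∀ j, Y j) =>
          (fbar z.1 * G z.2) * Real.log (fbar z.1 * G z.2))
      rw [← hc]
      refine integral_congr_ae (Filter.Eventually.of_forall fun w => ?_)
      rw [hbark]
      rfl
    rw [comp]
    have e2 : (fun z : X × (∀ j, Y j) => (fbar z.1 * G z.2) * Real.log (fbar z.1 * G z.2))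
        = fun z => fbar z.1 * Real.log (fbar z.1) * G z.2
            + fbar z.1 * (G z.2 * Real.log (G z.2)) := by
      funext z
      rcases eq_or_lt_of_le (fbar0 z.1) with h0 | hpos
      · rw [← h0]; simp
      · rw [Real.log_mul (ne_of_gt hpos) (ne_of_gt (Gpos z.2))]; ring
    rw [e2, integral_add kbarint1 kbarint2, ip1, ip2, Gone, mul_one, fbarone, one_mul,
      GlogGval]
    congr 1
    exact Finset.sum_congr rfl fun j _ => Sg j
  -- the mixture identity for the system entropies
  have crossval : ∫ x, fbar x * Real.log (fbar x) ∂μ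
      = ∑ i, p i * ∫ x, f i x * Real.log (fbar x) ∂μ := by
    have e : (fun x => fbar x * Real.log (fbar x))
        = fun x => ∑ i, p i * (f i x * Real.log (fbar x)) := by
      funext x
      set L := Real.log (fbar x) with hL
      simp only [hfbar]
      rw [Finset.sum_mul]
      exact Finset.sum_congr rfl fun i _ => by ring
    rw [e, integral_finset_sum _ (fun i _ => (hcross i).const_mul _)]
    exact Finset.sum_congr rfl fun i _ => integral_const_mul _ _
  have relsplit : ∀ i, ∫ x, f i x * Real.log (f i x / fbar x) ∂μ
      = ∫ x, f i x * Real.log (f i x) ∂μ - ∫ x, f i x * Real.log (fbar x) ∂μ := by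
    intro i
    rw [← integral_sub (hSf i) (hcross i)]
    refine integral_congr_ae (Filter.Eventually.of_forall fun x => ?_)
    show f i x * Real.log (f i x / fbar x)
      = f i x * Real.log (f i x) - f i x * Real.log (fbar x)
    rcases eq_or_lt_of_le (hf0 i x) with h0 | hpos
    · rw [← h0]; simp
    · have hfbarpos : 0 < fbar x := by
        rw [hfbar]
        refine lt_of_lt_of_le (mul_pos (hp i) hpos) ?_
        exact Finset.single_le_sum
          (f := fun i' => p i' * f i' x)
          (fun i' _ => mul_nonneg (hp i').le (hf0 i' x)) (Finset.mem_univ i)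
      rw [Real.log_div (ne_of_gt hpos) (ne_of_gt hfbarpos)]; ring
  have fbarlog : ∫ x, fbar x * Real.log (fbar x) ∂μ
      = ∑ i, p i * ∫ x, f i x * Real.log (f i x) ∂μ
        - ∑ i, p i * ∫ x, f i x * Real.log (f i x / fbar x) ∂μ := by
    rw [Finset.sum_congr rfl (fun i (_ : i ∈ Finset.univ) => by rw [relsplit i] :
      ∀ i ∈ Finset.univ, p i * ∫ x, f i x * Real.log (f i x / fbar x) ∂μ
        = p i * (∫ x, f i x * Real.log (f i x) ∂μ - ∫ x, f i x * Real.log (fbar x) ∂μ))]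
    rw [Finset.sum_congr rfl (fun i (_ : i ∈ Finset.univ) => mul_sub (p i) _ _),
      Finset.sum_sub_distrib, crossval]
    ring
  -- hooking everything together
  have Fcomm : ∫ x, Real.log (fb x) * fb x ∂μ = ∫ x, fb x * Real.log (fb x) ∂μ :=
    integral_congr_ae (Filter.Eventually.of_forall fun x => mul_comm _ _)
  have sumsub1 : ∑ j, (-Real.log (Z j) - β j * ∑ i, p i * ∫ y, H j y * g' i j y ∂ν j)
      = -(∑ j, Real.log (Z j))
        - ∑ j, β j * ∑ i, p i * ∫ y, H j y * g' i j y ∂ν j := by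
    rw [Finset.sum_sub_distrib, Finset.sum_neg_distrib]
  have sumsub2 : ∑ j, (-Real.log (Z j) - β j * ∫ y, H j y * g j y ∂ν j)
      = -(∑ j, Real.log (Z j)) - ∑ j, β j * ∫ y, H j y * g j y ∂ν j := by
    rw [Finset.sum_sub_distrib, Finset.sum_neg_distrib]
  rw [hbarlogq_val, Einv, Fcomm, sumsub1, sumsub2] at gibbs
  -- rewrite the goal
  have LHSeq : ∑ i, p i * ∑ j, β j * Q i j
      = ∑ j, β j * ∫ y, H j y * g j y ∂ν j
        - ∑ j, β j * ∑ i, p i * ∫ y, H j y * g' i j y ∂ν j := by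
    simp only [hQ]
    rw [Finset.sum_congr rfl (fun i (_ : i ∈ Finset.univ) => Finset.mul_sum _ _ _ :
      ∀ i ∈ Finset.univ, p i * ∑ j, β j * ((∫ y, H j y * g j y ∂ν j)
          - ∫ y, H j y * g' i j y ∂ν j)
        = ∑ j, p i * (β j * ((∫ y, H j y * g j y ∂ν j) - ∫ y, H j y * g' i j y ∂ν j)))]
    rw [Finset.sum_comm]
    rw [← Finset.sum_sub_distrib]
    refine Finset.sum_congr rfl fun j _ => ?_
    rw [Finset.sum_congr rfl (fun i (_ : i ∈ Finset.univ) => by ring :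
      ∀ i ∈ Finset.univ, p i * (β j * ((∫ y, H j y * g j y ∂ν j)
          - ∫ y, H j y * g' i j y ∂ν j))
        = p i * (β j * ∫ y, H j y * g j y ∂ν j)
          - β j * (p i * ∫ y, H j y * g' i j y ∂ν j))]
    rw [Finset.sum_sub_distrib, ← Finset.sum_mul, hps, ← Finset.mul_sum]
    ring
  have RHSeq : (∑ i, p i * ((-∫ x, fb x * Real.log (fb x) ∂μ)
        - (-∫ x, f i x * Real.log (f i x) ∂μ)))
      - ∑ i, p i * ∫ x, f i x * Real.log (f i x / fbar x) ∂μ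
      = (∫ x, fbar x * Real.log (fbar x) ∂μ) - ∫ x, fb x * Real.log (fb x) ∂μ := by
    rw [Finset.sum_congr rfl (fun i (_ : i ∈ Finset.univ) => by ring :
      ∀ i ∈ Finset.univ, p i * ((-∫ x, fb x * Real.log (fb x) ∂μ)
          - (-∫ x, f i x * Real.log (f i x) ∂μ))
        = p i * (-∫ x, fb x * Real.log (fb x) ∂μ)
          + p i * ∫ x, f i x * Real.log (f i x) ∂μ)]
    rw [Finset.sum_add_distrib, ← Finset.sum_mul, hps, fbarlog]
    ring
  rw [LHSeq, RHSeq]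
  linarith [gibbs]
end
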